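/- arXiv:1102.4804 — 5 statements merged into one kernel-verified Lean document; each statement's English description precedes it below -/
import Mathlib

section
/- If a monomial ideal's Möbius sum is taken over the lcm-lattice generated by two finite sets X and Y of monomials such that every monomial in X is coprime to every monomial in Y, then the Möbius sum factors: M(L(X ∪ Y)) = M(L(X))·M(L(Y)). -/
open scoped Classical

/-- Monomials in variables `σ` are identified with their exponent vectors `σ →₀ ℕ`;
divisibility is the pointwise order, lcm is `⊔`, gcd is `⊓`, and the monomial `1` is `0`.
The lcm-lattice on a finite set `X` of monomials consists of the lcms of all subsets of
`X` (the lcm of the empty set being `1`, i.e. `0` as an exponent vector). -/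
noncomputable def lcmLattice {σ : Type*} (X : Finset (σ →₀ ℕ)) : Finset (σ →₀ ℕ) :=
  X.powerset.image fun S => S.sup id

/-- `μ` is the Möbius function of the finite poset of monomials `L` (with bottom `1 = 0`):
`μ(1) = 1` and for every `x ∈ L`, `x ≠ 1`, `Σ_{y ∈ L, y ≤ x} μ(y) = 0`. -/
def IsMobiusOf {σ : Type*} (L : Finset (σ →₀ ℕ)) (μ : (σ →₀ ℕ) → ℤ) : Prop :=
  μ 0 = 1 ∧ ∀ x ∈ L, x ≠ 0 → (∑ y ∈ L, if y ≤ x then μ y else 0) = 0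

/-- The Möbius sum `M(L) = Σ_{x ∈ L} μ(x)·x`, an element of the polynomial ring whose
monomials have exponent vectors in `σ →₀ ℕ`. -/
noncomputable def mobiusSum {σ : Type*} (L : Finset (σ →₀ ℕ)) (μ : (σ →₀ ℕ) → ℤ) :
    MvPolynomial σ ℤ :=
  ∑ x ∈ L, μ x • MvPolynomial.monomial x 1

private lemma aux_sup_le_sup_iff {σ : Type*} {a b a' b' : σ →₀ ℕ}
    (h1 : a ⊓ b' = 0) (h2 : a' ⊓ b = 0) :
    a ⊔ b ≤ a' ⊔ b' ↔ a ≤ a' ∧ b ≤ b' := by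
  constructor
  · intro h
    constructor <;>
    · rw [Finsupp.le_def]
      intro i
      have hh := Finsupp.le_def.mp h i
      have e1 := congrArg (fun f : σ →₀ ℕ => f i) h1
      have e2 := congrArg (fun f : σ →₀ ℕ => f i) h2
      simp only [Finsupp.sup_apply, Finsupp.inf_apply, Finsupp.coe_zero, Pi.zero_apply,
        le_sup_iff] at hh e1 e2 ⊢
      omega
  · rintro ⟨ha, hb⟩; exact sup_le_sup ha hb

private lemma aux_sup_eq_add {σ : Type*} {a b : σ →₀ ℕ} (h : a ⊓ b = 0) : a ⊔ b = a + b := by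
  ext i
  have := congrArg (fun f : σ →₀ ℕ => f i) h
  simp only [Finsupp.inf_apply, Finsupp.coe_zero, Pi.zero_apply] at this
  simp only [Finsupp.sup_apply, Finsupp.add_apply]
  omega

private lemma aux_sup_inf_zero {σ : Type*} {S : Finset (σ →₀ ℕ)} {b : σ →₀ ℕ}
    (h : ∀ x ∈ S, x ⊓ b = 0) : S.sup id ⊓ b = 0 := by
  classical
  induction S using Finset.induction_on with
  | empty =>
    rw [Finset.sup_empty, Finsupp.bot_eq_zero]
    ext i; simp [Finsupp.inf_apply]
  | @insert x s hx ih =>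
    rw [Finset.sup_insert]
    ext i
    have e1 := congrArg (fun f : σ →₀ ℕ => f i) (h x (Finset.mem_insert_self x s))
    have e2 := congrArg (fun f : σ →₀ ℕ => f i)
      (ih (fun y hy => h y (Finset.mem_insert_of_mem hy)))
    simp only [Finsupp.inf_apply, Finsupp.sup_apply, Finsupp.coe_zero, Pi.zero_apply,
      id] at e1 e2 ⊢
    omega

/-- If every monomial of `X` is coprime to every monomial of `Y`, then the Möbius sum over
the lcm-lattice `L(X ∪ Y)` factors: `M(L(X ∪ Y)) = M(L(X)) · M(L(Y))`. -/
theorem mobiusSum_mul_of_coprime {σ : Type*} (X Y : Finset (σ →₀ ℕ))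
    (hcop : ∀ x ∈ X, ∀ y ∈ Y, x ⊓ y = 0)
    (μ μX μY : (σ →₀ ℕ) → ℤ)
    (hμ : IsMobiusOf (lcmLattice (X ∪ Y)) μ)
    (hμX : IsMobiusOf (lcmLattice X) μX)
    (hμY : IsMobiusOf (lcmLattice Y) μY) :
    mobiusSum (lcmLattice (X ∪ Y)) μ = mobiusSum (lcmLattice X) μX * mobiusSum (lcmLattice Y) μY := by
  classical
  obtain ⟨hμ0, hμrec⟩ := hμ
  obtain ⟨hμX0, hμXrec⟩ := hμX
  obtain ⟨hμY0, hμYrec⟩ := hμY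
  have hmem : ∀ (Z : Finset (σ →₀ ℕ)) (z : σ →₀ ℕ),
      z ∈ lcmLattice Z ↔ ∃ S, S ⊆ Z ∧ S.sup id = z := by
    intro Z z
    simp [lcmLattice, Finset.mem_powerset]
  -- every member of lcmLattice X is ⊓-coprime to every member of lcmLattice Y
  have hinf : ∀ a ∈ lcmLattice X, ∀ b ∈ lcmLattice Y, a ⊓ b = 0 := by
    intro a ha b hb
    obtain ⟨S, hS, rfl⟩ := (hmem X a).mp ha
    obtain ⟨T, hT, rfl⟩ := (hmem Y b).mp hb
    refine aux_sup_inf_zero (fun x hx => ?_)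
    rw [inf_comm]
    exact aux_sup_inf_zero (fun y hy => by rw [inf_comm]; exact hcop x (hS hx) y (hT hy))
  set P : Finset ((σ →₀ ℕ) × (σ →₀ ℕ)) := lcmLattice X ×ˢ lcmLattice Y with hP
  have himg : lcmLattice (X ∪ Y) = P.image (fun p => p.1 ⊔ p.2) := by
    ext z
    simp only [Finset.mem_image, hP, Finset.mem_product]
    constructor
    · intro hz
      obtain ⟨S, hS, rfl⟩ := (hmem _ _).mp hz
      refine ⟨((S ∩ X).sup id, (S ∩ Y).sup id), ⟨?_, ?_⟩, ?_⟩
      · exact (hmem _ _).mpr ⟨S ∩ X, Finset.inter_subset_right, rfl⟩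
      · exact (hmem _ _).mpr ⟨S ∩ Y, Finset.inter_subset_right, rfl⟩
      · rw [← Finset.sup_union, ← Finset.inter_union_distrib_left,
          Finset.inter_eq_left.mpr hS]
    · rintro ⟨⟨pa, pb⟩, ⟨ha, hb⟩, rfl⟩
      obtain ⟨S, hS, rfl⟩ := (hmem _ _).mp ha
      obtain ⟨T, hT, rfl⟩ := (hmem _ _).mp hb
      exact (hmem _ _).mpr ⟨S ∪ T, Finset.union_subset_union hS hT, Finset.sup_union⟩
  have hinj : ∀ p ∈ P, ∀ q ∈ P, p.1 ⊔ p.2 = q.1 ⊔ q.2 → p = q := by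
    rintro ⟨pa, pb⟩ hp ⟨qa, qb⟩ hq he
    obtain ⟨hp1, hp2⟩ := Finset.mem_product.mp hp
    obtain ⟨hq1, hq2⟩ := Finset.mem_product.mp hq
    have h1 := (aux_sup_le_sup_iff (hinf _ hp1 _ hq2) (hinf _ hq1 _ hp2)).mp he.le
    have h2 := (aux_sup_le_sup_iff (hinf _ hq1 _ hp2) (hinf _ hp1 _ hq2)).mp he.ge
    exact Prod.ext (le_antisymm h1.1 h2.1) (le_antisymm h1.2 h2.2)
  -- the key lemma : the Möbius function factors
  have key : ∀ z : σ →₀ ℕ, ∀ a ∈ lcmLattice X, ∀ b ∈ lcmLattice Y,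
      a ⊔ b = z → μ z = μX a * μY b := by
    intro z
    induction z using WellFoundedLT.induction with
    | _ z IH =>
    intro a ha b hb hz
    by_cases h0 : z = 0
    · subst h0
      have ha0 : a = 0 := le_antisymm (hz ▸ le_sup_left) zero_le
      have hb0 : b = 0 := le_antisymm (hz ▸ le_sup_right) zero_le
      rw [ha0, hb0, hμ0, hμX0, hμY0]; ring
    · have hab : (a, b) ∈ P := Finset.mem_product.mpr ⟨ha, hb⟩
      have hzmem : z ∈ lcmLattice (X ∪ Y) := by
        rw [himg]; exact Finset.mem_image.mpr ⟨(a, b), hab, hz⟩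
      have hsum := hμrec z hzmem h0
      rw [himg, Finset.sum_image hinj, ← Finset.add_sum_erase _ _ hab] at hsum
      rw [if_pos (le_of_eq hz), hz] at hsum
      have herase : ∑ p ∈ P.erase (a, b), (if p.1 ⊔ p.2 ≤ z then μ (p.1 ⊔ p.2) else 0)
          = ∑ p ∈ P.erase (a, b), (if p.1 ≤ a ∧ p.2 ≤ b then μX p.1 * μY p.2 else 0) := by
        refine Finset.sum_congr rfl (fun p hp => ?_)
        obtain ⟨hpne, hpP⟩ := Finset.mem_erase.mp hp
        obtain ⟨hp1, hp2⟩ := Finset.mem_product.mp hpP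
        have hiff : p.1 ⊔ p.2 ≤ z ↔ p.1 ≤ a ∧ p.2 ≤ b := by
          rw [← hz]
          exact aux_sup_le_sup_iff (hinf _ hp1 _ hb) (hinf _ ha _ hp2)
        by_cases hc : p.1 ≤ a ∧ p.2 ≤ b
        · rw [if_pos hc, if_pos (hiff.mpr hc)]
          have hne : p.1 ⊔ p.2 ≠ z := fun he =>
            hpne (by simpa using hinj p hpP (a, b) hab (he.trans hz.symm))
          exact IH _ (lt_of_le_of_ne (hiff.mpr hc) hne) _ hp1 _ hp2 rfl
        · rw [if_neg hc, if_neg (fun hcc => hc (hiff.mp hcc))]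
      rw [herase] at hsum
      have hT : ∑ p ∈ P, (if p.1 ≤ a ∧ p.2 ≤ b then μX p.1 * μY p.2 else 0) = 0 := by
        have hsplit : ∀ p : (σ →₀ ℕ) × (σ →₀ ℕ),
            (if p.1 ≤ a ∧ p.2 ≤ b then μX p.1 * μY p.2 else 0)
              = (if p.1 ≤ a then μX p.1 else 0) * (if p.2 ≤ b then μY p.2 else 0) := by
          intro p
          by_cases h1 : p.1 ≤ a <;> by_cases h2 : p.2 ≤ b <;> simp [h1, h2]
        have hfac : (∑ p ∈ P, (if p.1 ≤ a then μX p.1 else 0) * (if p.2 ≤ b then μY p.2 else 0))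
            = (∑ a' ∈ lcmLattice X, if a' ≤ a then μX a' else 0) *
              (∑ b' ∈ lcmLattice Y, if b' ≤ b then μY b' else 0) := by
          rw [Finset.sum_mul_sum, hP, Finset.sum_product]
        simp_rw [hsplit]
        rw [hfac]
        by_cases haz : a = 0
        · have hbz : b ≠ 0 := fun hb0 => h0 (by rw [← hz, haz, hb0]; simp)
          rw [hμYrec b hb hbz, mul_zero]
        · rw [hμXrec a ha haz, zero_mul]
      have hTsplit := Finset.add_sum_erase P
        (fun p => if p.1 ≤ a ∧ p.2 ≤ b then μX p.1 * μY p.2 else 0) hab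
      simp only [le_refl, and_self, if_true] at hTsplit
      rw [hT] at hTsplit
      linarith [hsum, hTsplit]
  -- assemble
  rw [mobiusSum, mobiusSum, mobiusSum, himg, Finset.sum_image hinj]
  have hcongr : ∀ p ∈ P, μ (p.1 ⊔ p.2) • MvPolynomial.monomial (p.1 ⊔ p.2) (1 : ℤ)
      = (μX p.1 • MvPolynomial.monomial p.1 (1 : ℤ)) *
        (μY p.2 • MvPolynomial.monomial p.2 (1 : ℤ)) := by
    intro p hp
    obtain ⟨hp1, hp2⟩ := Finset.mem_product.mp hp
    rw [key _ _ hp1 _ hp2 rfl, aux_sup_eq_add (hinf _ hp1 _ hp2),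
      show MvPolynomial.monomial (p.1 + p.2) (1 : ℤ)
          = MvPolynomial.monomial p.1 1 * MvPolynomial.monomial p.2 1 from by
        rw [MvPolynomial.monomial_mul, mul_one],
      ← smul_mul_smul_comm]
  rw [Finset.sum_congr rfl hcongr, Finset.sum_mul_sum, hP, ← Finset.sum_product']
end

section
/- The Ehrhart series of the edge polytope of an even cycle with 2n edges (n ≥ 2) equals (1 + t + ⋯ + t^{n−1})/(1 − t)^{2n−1}. -/
open Pointwise
open Finset
open scoped Classical
open Fin.NatCast

/-- The set of vertices of the edge polytope: for each edge {i,j}, the 0/1 indicator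
vector of {i,j}. The edge polytope is their convex hull. -/
noncomputable def edgePolytope {V : Type*} [Fintype V] (G : SimpleGraph V) : Set (V → ℝ) :=
  convexHull ℝ {x | ∃ i j, G.Adj i j ∧ x = fun k => if k = i ∨ k = j then (1 : ℝ) else 0}

section Helpers
variable {N : ℕ} [NeZero N]


theorem parity_add' (hdvd : 2 ∣ N) (a b : Fin N) : (a + b).val % 2 = (a.val + b.val) % 2 := by
  rw [Fin.add_def, Nat.mod_mod_of_dvd _ hdvd]

theorem two_le_N (hdvd : 2 ∣ N) : 2 ≤ N := by
  rcases hdvd with ⟨c, rfl⟩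
  have := NeZero.ne (2 * c)
  omega

theorem val_one_of (hN : 2 ≤ N) : (1 : Fin N).val = 1 := by
  rw [Fin.val_one']; exact Nat.mod_eq_of_lt (by omega)

theorem parity_flip (hdvd : 2 ∣ N) (k : Fin N) : (k - 1).val % 2 = 0 ↔ ¬ (k.val % 2 = 0) := by
  have h := parity_add' hdvd (k - 1) 1
  rw [sub_add_cancel, val_one_of (two_le_N hdvd)] at h
  omega

theorem altlem (M : Type) [CommRing M] (d : Fin N → M) (hd : ∀ k, d k = - d (k - 1))
    (e : Fin N) (j : ℕ) : d (e + j) = (-1)^j * d e := by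
  induction j with
  | zero => simp
  | succ j ih =>
    have h1 : ((j+1 : ℕ) : Fin N) = (j : Fin N) + 1 := by push_cast; ring
    rw [h1, ← add_assoc, hd (e + j + 1), add_sub_cancel_right, ih]
    ring

theorem altlem2 (x : Fin N → ℤ) (l : Fin N → ℝ) (hl : ∀ k, l (k-1) + l k = (x k : ℝ))
    (e : Fin N) (j : ℕ) : ∃ z : ℤ, l (e + j) = (-1)^j * l e + (z : ℝ) := by
  induction j with
  | zero => exact ⟨0, by simp⟩
  | succ j ih =>
    obtain ⟨z, hz⟩ := ih
    have h1 : ((j+1 : ℕ) : Fin N) = (j : Fin N) + 1 := by push_cast; ring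
    refine ⟨x (e + j + 1) - z, ?_⟩
    have h2 := hl (e + j + 1)
    rw [add_sub_cancel_right] at h2
    have h3 : l (e + (j:Fin N) + 1) = (x (e + j + 1) : ℝ) - l (e + j) := by linarith
    rw [h1, ← add_assoc, h3, hz]
    push_cast
    ring

theorem parity_decomp (hdvd : 2 ∣ N) (e f : Fin N) :
    f.val % 2 = (e.val + (f - e).val) % 2 ∧ e + ((f - e).val : Fin N) = f := by
  have hj : e + ((f - e).val : Fin N) = f := by rw [Fin.cast_val_eq_self, add_sub_cancel]
  have hp := parity_add' hdvd e ((f - e).val : Fin N)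
  rw [Fin.cast_val_eq_self, add_sub_cancel] at hp
  exact ⟨hp, hj⟩

theorem altlem' (M : Type) [CommRing M] (hdvd : 2 ∣ N) (d : Fin N → M)
    (hd : ∀ k, d k = - d (k - 1)) (e f : Fin N) :
    d f = (if f.val % 2 = e.val % 2 then d e else - d e) := by
  obtain ⟨hp, hj⟩ := parity_decomp hdvd e f
  have h := altlem M d hd e (f - e).val
  rw [hj] at h
  split_ifs with hpar
  · rw [h, (Nat.even_iff.mpr (by omega) : Even (f-e).val).neg_one_pow, one_mul]
  · rw [h, (Nat.odd_iff.mpr (by omega) : Odd (f-e).val).neg_one_pow, neg_one_mul]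

theorem altlem2' (hdvd : 2 ∣ N) (x : Fin N → ℤ) (l : Fin N → ℝ)
    (hl : ∀ k, l (k-1) + l k = (x k : ℝ)) (e f : Fin N) :
    ∃ z : ℤ, l f = (if f.val % 2 = e.val % 2 then l e else - l e) + (z : ℝ) := by
  obtain ⟨hp, hj⟩ := parity_decomp hdvd e f
  obtain ⟨z, hz⟩ := altlem2 x l hl e (f - e).val
  rw [hj] at hz
  refine ⟨z, ?_⟩
  split_ifs with hpar
  · rw [hz, (Nat.even_iff.mpr (by omega) : Even (f-e).val).neg_one_pow, one_mul]
  · rw [hz, (Nat.odd_iff.mpr (by omega) : Odd (f-e).val).neg_one_pow, neg_one_mul]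

theorem cardE (hdvd : 2 ∣ N) :
    (univ.filter (fun e : Fin N => e.val % 2 = 0)).card = N / 2 := by
  have key : (univ.filter (fun e : Fin N => e.val % 2 = 0)).card
      = (univ.filter (fun e : Fin N => ¬ e.val % 2 = 0)).card := by
    refine Finset.card_bij' (fun e _ => e + 1) (fun o _ => o - 1) ?_ ?_ ?_ ?_
    · intro e he
      simp only [mem_filter, mem_univ, true_and] at he ⊢
      rw [parity_add' hdvd, val_one_of (two_le_N hdvd)]
      omega
    · intro o ho
      simp only [mem_filter, mem_univ, true_and] at ho ⊢
      rw [parity_flip hdvd]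
      exact ho
    · intro e _; show e + 1 - 1 = e; rw [add_sub_cancel_right]
    · intro o _; show o - 1 + 1 = o; rw [sub_add_cancel]
  have tot := Finset.card_filter_add_card_filter_not
    (s := (univ : Finset (Fin N))) (p := fun e : Fin N => e.val % 2 = 0)
  rw [Finset.card_univ, Fintype.card_fin] at tot
  omega

theorem stars_and_bars (k m : ℕ) :
    Nat.card {μ : Fin k → ℕ // ∑ e, μ e = m} = (k + m - 1).choose m := by
  rw [Nat.card_congr (Sym.equivNatSumOfFintype (Fin k) m).symm, Nat.card_eq_fintype_card,
    Sym.card_sym_eq_choose, Fintype.card_fin]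


theorem cardO (hdvd : 2 ∣ N) :
    (univ.filter (fun e : Fin N => ¬ e.val % 2 = 0)).card = N / 2 := by
  have h1 := cardE hdvd
  have tot := Finset.card_filter_add_card_filter_not
    (s := (univ : Finset (Fin N))) (p := fun e : Fin N => e.val % 2 = 0)
  rw [Finset.card_univ, Fintype.card_fin] at tot
  omega


noncomputable def vtx (N : ℕ) [NeZero N] (e : Fin N) : Fin N → ℝ := fun k => if k = e ∨ k = e + 1 then 1 else 0

theorem self_ne_sub_one (hN : 2 ≤ N) (k : Fin N) : k ≠ k - 1 := by
  intro h
  have h1 : k + 1 = k + 0 := by nth_rewrite 1 [h]; rw [sub_add_cancel, add_zero]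
  have h2 : (1 : Fin N) = 0 := add_left_cancel h1
  have h3 := congrArg Fin.val h2
  rw [val_one_of hN] at h3
  exact one_ne_zero h3

theorem sum_smul_vtx (hN : 2 ≤ N) (w : Fin N → ℝ) (k : Fin N) :
    (∑ e, w e • vtx N e) k = w (k - 1) + w k := by
  rw [Finset.sum_apply]
  simp only [Pi.smul_apply, smul_eq_mul, vtx]
  have hsplit : ∀ e : Fin N, (if k = e ∨ k = e + 1 then (1:ℝ) else 0)
      = (if e = k then 1 else 0) + (if e = k - 1 then 1 else 0) := by
    intro e
    by_cases h1 : e = k <;> by_cases h2 : e = k - 1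
    · exact absurd (h1 ▸ h2) (self_ne_sub_one hN k)
    · rw [if_pos (Or.inl h1.symm), if_pos h1, if_neg h2]; norm_num
    · have : k = e + 1 := by rw [h2, sub_add_cancel]
      rw [if_pos (Or.inr this), if_neg h1, if_pos h2]; norm_num
    · rw [if_neg, if_neg h1, if_neg h2]; norm_num
      rintro (h | h)
      · exact h1 h.symm
      · exact h2 (by rw [h, add_sub_cancel_right])
  simp_rw [hsplit, mul_add, Finset.sum_add_distrib, mul_ite, mul_one, mul_zero,
    Finset.sum_ite_eq' univ, mem_univ, if_true]
  ring

theorem edgePolytope_cycle (hN : 2 ≤ N) :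
    edgePolytope (SimpleGraph.cycleGraph N) = convexHull ℝ (Set.range (vtx N)) := by
  unfold edgePolytope
  congr 1
  ext x
  constructor
  · rintro ⟨i, j, hadj, rfl⟩
    rw [SimpleGraph.cycleGraph_adj'] at hadj
    rcases hadj with h | h
    · have hij : i = j + 1 := by
        have h1 : i - j = 1 := Fin.val_injective (by rw [h, val_one_of hN])
        rw [← h1, add_sub_cancel]
      exact ⟨j, by funext k; rw [hij]; by_cases hk : k = j <;> by_cases hk2 : k = j + 1 <;> simp [vtx, hk, hk2]⟩
    · have hij : j = i + 1 := by
        have h1 : j - i = 1 := Fin.val_injective (by rw [h, val_one_of hN])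
        rw [← h1, add_sub_cancel]
      exact ⟨i, by rw [hij]; funext k; by_cases hk : k = i <;> by_cases hk2 : k = i + 1 <;> simp [vtx, hk, hk2]⟩
  · rintro ⟨e, rfl⟩
    refine ⟨e, e + 1, ?_, ?_⟩
    · rw [SimpleGraph.cycleGraph_adj']
      right
      rw [add_sub_cancel_left, val_one_of hN]
    · funext k; by_cases hk : k = e <;> by_cases hk2 : k = e + 1 <;> simp [vtx, hk, hk2]

theorem mem_dilate_iff (hdvd : 2 ∣ N) (m : ℕ) (x : Fin N → ℤ) :
    ((fun v => (x v : ℝ)) ∈ (m : ℝ) • edgePolytope (SimpleGraph.cycleGraph N)) ↔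
    ∃ μ : Fin N → ℕ, (∑ e, μ e = m) ∧ ∀ k, x k = μ (k-1) + μ k := by
  have hN : 2 ≤ N := two_le_N hdvd
  constructor
  · intro hx
    rw [edgePolytope_cycle hN] at hx
    obtain ⟨y, hy, hxy⟩ := Set.mem_smul_set.mp hx
    obtain ⟨ι, _inst, w, z, hw0, hw1, hz, hsum⟩ := mem_convexHull_iff_exists_fintype.mp hy
    choose c hc using hz
    set lam : Fin N → ℝ := fun e => (m:ℝ) * ∑ i ∈ univ.filter (fun i => c i = e), w i with hlam
    have hlam0 : ∀ e, 0 ≤ lam e :=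
      fun e => mul_nonneg (Nat.cast_nonneg m) (Finset.sum_nonneg fun i _ => hw0 i)
    have hlamsum : ∑ e, lam e = m := by
      rw [hlam]
      simp only
      rw [← Finset.mul_sum,
        Finset.sum_fiberwise_of_maps_to (fun i _ => Finset.mem_univ (c i)) w, hw1, mul_one]
    have hx_eq : ∀ k, (x k : ℝ) = lam (k-1) + lam k := by
      have h1 : (fun v => (x v : ℝ)) = ∑ e, lam e • vtx N e := by
        rw [← hxy, ← hsum]
        calc (m:ℝ) • ∑ i, w i • z i = ∑ i, ((m:ℝ) * w i) • z i := by
              rw [Finset.smul_sum]; simp_rw [smul_smul]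
        _ = ∑ e, ∑ i ∈ univ.filter (fun i => c i = e), ((m:ℝ) * w i) • z i :=
              (Finset.sum_fiberwise_of_maps_to (fun i _ => Finset.mem_univ (c i)) _).symm
        _ = ∑ e, lam e • vtx N e := by
              refine Finset.sum_congr rfl fun e _ => ?_
              calc ∑ i ∈ univ.filter (fun i => c i = e), ((m:ℝ) * w i) • z i
                  = ∑ i ∈ univ.filter (fun i => c i = e), ((m:ℝ) * w i) • vtx N e := by
                    refine Finset.sum_congr rfl fun i hi => ?_
                    rw [← hc i, (Finset.mem_filter.mp hi).2]
                _ = (∑ i ∈ univ.filter (fun i => c i = e), (m:ℝ) * w i) • vtx N e := by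
                    rw [Finset.sum_smul]
                _ = lam e • vtx N e := by rw [hlam]; simp only [← Finset.mul_sum]
      intro k
      have h2 := congrFun h1 k
      rw [h2, sum_smul_vtx hN]
    have hrec : ∀ k, lam (k-1) + lam k = (x k : ℝ) := fun k => (hx_eq k).symm
    obtain ⟨e₀, he₀mem, he₀min⟩ := Finset.exists_min_image
      (univ.filter fun e : Fin N => e.val % 2 = 0) lam
      ⟨0, by simp [Finset.mem_filter]⟩
    have he₀ : e₀.val % 2 = 0 := (Finset.mem_filter.mp he₀mem).2
    set c0 := lam e₀ with hc0
    have hc00 : 0 ≤ c0 := hlam0 e₀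
    set μR : Fin N → ℝ := fun e => if e.val % 2 = 0 then lam e - c0 else lam e + c0 with hμR
    have hμR_eq : ∀ e, μR e = lam e + (if e.val % 2 = 0 then -c0 else c0) := by
      intro e; by_cases he : e.val % 2 = 0 <;> simp [hμR, he] <;> ring
    have hint : ∀ e, ∃ zn : ℕ, (zn : ℝ) = μR e := by
      intro e
      obtain ⟨z, hz⟩ := altlem2' hdvd x lam hrec e₀ e
      by_cases he : e.val % 2 = 0
      · rw [if_pos (by rw [he, he₀])] at hz
        have hμe : μR e = z := by simp only [hμR, if_pos he]; rw [hz]; ring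
        have hz0 : (0:ℝ) ≤ (z:ℝ) := by
          rw [← hμe]
          simp only [hμR, if_pos he]
          have := he₀min e (Finset.mem_filter.mpr ⟨Finset.mem_univ e, he⟩)
          linarith
        have hz0' : 0 ≤ z := by exact_mod_cast hz0
        exact ⟨z.toNat, by rw [hμe]; exact_mod_cast Int.toNat_of_nonneg hz0'⟩
      · rw [if_neg (by rw [he₀]; exact fun h => he h)] at hz
        have hμe : μR e = z := by simp only [hμR, if_neg he]; rw [hz]; ring
        have hz0 : (0:ℝ) ≤ (z:ℝ) := by
          rw [← hμe]; simp only [hμR, if_neg he]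
          have := hlam0 e
          linarith
        have hz0' : 0 ≤ z := by exact_mod_cast hz0
        exact ⟨z.toNat, by rw [hμe]; exact_mod_cast Int.toNat_of_nonneg hz0'⟩
    choose μ hμ using hint
    refine ⟨μ, ?_, ?_⟩
    · have hsum2 : ∑ e, (μ e : ℝ) = m := by
        simp_rw [hμ, hμR_eq, Finset.sum_add_distrib, hlamsum, Finset.sum_ite,
          Finset.sum_const, cardE hdvd]
        have : (univ.filter fun e : Fin N => ¬ e.val % 2 = 0).card = N / 2 := cardO hdvd
        rw [this]
        simp [nsmul_eq_mul]
      exact_mod_cast hsum2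
    · intro k
      have hk2 : (μ (k-1) : ℝ) + μ k = x k := by
        rw [hμ, hμ]
        have hpf := parity_flip hdvd k
        by_cases hk : k.val % 2 = 0
        · have h1 : ¬ (k-1).val % 2 = 0 := by omega
          simp only [hμR, if_pos hk, if_neg h1]
          have := hrec k; linarith
        · have h1 : (k-1).val % 2 = 0 := hpf.mpr hk
          simp only [hμR, if_pos h1, if_neg hk]
          have := hrec k; linarith
      exact_mod_cast hk2.symm
  · rintro ⟨μ, hsum, hrec⟩
    have hx_eq : (fun v => (x v : ℝ)) = ∑ e, (μ e : ℝ) • vtx N e := by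
      funext k
      rw [sum_smul_vtx hN, hrec k]
      push_cast
      ring
    rw [edgePolytope_cycle hN]
    rcases Nat.eq_zero_or_pos m with rfl | hm
    · have hall : ∀ e, μ e = 0 := fun e => (Finset.sum_eq_zero_iff.mp hsum) e (Finset.mem_univ e)
      refine Set.mem_smul_set.mpr ⟨vtx N 0, subset_convexHull ℝ _ ⟨0, rfl⟩, ?_⟩
      rw [hx_eq]
      simp [hall]
    · refine Set.mem_smul_set.mpr ⟨∑ e, ((μ e : ℝ)/(m:ℝ)) • vtx N e, ?_, ?_⟩
      · refine mem_convexHull_of_exists_fintype (fun e => (μ e : ℝ)/(m:ℝ)) (vtx N)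
          (fun e => by positivity) ?_ (fun e => ⟨e, rfl⟩) rfl
        rw [← Finset.sum_div]
        rw [show ∑ e, (μ e : ℝ) = m by exact_mod_cast congrArg Nat.cast hsum]
        exact div_self (by positivity)
      · rw [hx_eq, Finset.smul_sum]
        refine Finset.sum_congr rfl fun e _ => ?_
        rw [smul_smul, mul_div_cancel₀]
        positivity
end Helpers


/-- Number of lattice points in the `m`-th dilate of the edge polytope. -/
noncomputable def ehrhartCount {V : Type*} [Fintype V] (G : SimpleGraph V) (m : ℕ) : ℕ :=
  Nat.card {x : V → ℤ // (fun v => (x v : ℝ)) ∈ (m : ℝ) • edgePolytope G}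

section Count

theorem count_formula (n : ℕ) (hn : 2 ≤ n) (m : ℕ) :
    ehrhartCount (SimpleGraph.cycleGraph (2*n)) m
      = (2*n + m - 1).choose m - (m + n - 1).choose (2*n - 1) := by
  haveI : NeZero (2*n) := ⟨by omega⟩
  have hdvd : 2 ∣ 2*n := ⟨n, rfl⟩
  set T := {μ : Fin (2*n) → ℕ //
    (∑ e, μ e = m) ∧ ∃ e : Fin (2*n), e.val % 2 = 0 ∧ μ e = 0} with hT
  have key : ehrhartCount (SimpleGraph.cycleGraph (2*n)) m = Nat.card T := by
    rw [ehrhartCount]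
    apply Nat.card_congr
    refine Equiv.symm (Equiv.ofBijective
      (fun μ => ⟨fun k => (μ.1 (k-1) : ℤ) + μ.1 k,
        (mem_dilate_iff hdvd m _).mpr ⟨μ.1, μ.2.1, fun k => rfl⟩⟩) ⟨?_, ?_⟩)
    · rintro ⟨μ, hμs, hμz⟩ ⟨μ', hμs', hμz'⟩ heq
      simp only [Subtype.mk_eq_mk] at heq
      have heq' : ∀ k : Fin (2*n), (μ (k-1) : ℤ) + μ k = (μ' (k-1) : ℤ) + μ' k :=
        fun k => congrFun heq k
      set ν : Fin (2*n) → ℤ := fun e => (μ e : ℤ) - μ' e with hν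
      have hd : ∀ k, ν k = - ν (k-1) := by
        intro k
        have := heq' k
        simp only [hν]
        omega
      obtain ⟨e₀, he₀, hz₀⟩ := hμz
      obtain ⟨e₁, he₁, hz₁⟩ := hμz'
      have hv01 : ν e₁ = ν e₀ := by
        rw [altlem' ℤ hdvd ν hd e₀ e₁, if_pos (by omega)]
      have h0 : ν e₀ = 0 := by
        have l1 : ν e₀ ≤ 0 := by simp [hν, hz₀]
        have l2 : 0 ≤ ν e₁ := by simp [hν, hz₁]
        omega
      refine Subtype.ext (funext fun f => ?_)
      have halt := altlem' ℤ hdvd ν hd e₀ f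
      rw [h0] at halt
      have hf0 : ν f = 0 := by split_ifs at halt <;> simpa using halt
      simp only [hν] at hf0
      show μ f = μ' f
      omega
    · rintro ⟨x, hx⟩
      obtain ⟨μ, hsum, hrec⟩ := (mem_dilate_iff hdvd m x).mp hx
      obtain ⟨e₀, he₀mem, he₀min⟩ := Finset.exists_min_image
        (univ.filter fun e : Fin (2*n) => e.val % 2 = 0) μ ⟨0, by simp [Finset.mem_filter]⟩
      have he₀ : e₀.val % 2 = 0 := (Finset.mem_filter.mp he₀mem).2
      have hmin : ∀ e : Fin (2*n), e.val % 2 = 0 → μ e₀ ≤ μ e :=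
        fun e he => he₀min e (Finset.mem_filter.mpr ⟨Finset.mem_univ e, he⟩)
      set μ' : Fin (2*n) → ℕ :=
        fun e => if e.val % 2 = 0 then μ e - μ e₀ else μ e + μ e₀ with hμ'
      have hkey : ∀ k, (μ' (k-1) : ℤ) + μ' k = (μ (k-1) : ℤ) + μ k := by
        intro k
        have hpf := parity_flip hdvd k
        by_cases hk : k.val % 2 = 0
        · have h1 : ¬ (k-1).val % 2 = 0 := by omega
          simp only [hμ', if_pos hk, if_neg h1]
          have := hmin k hk
          push_cast [Nat.cast_sub this]
          ring
        · have h1 : (k-1).val % 2 = 0 := hpf.mpr hk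
          simp only [hμ', if_pos h1, if_neg hk]
          have := hmin (k-1) h1
          push_cast [Nat.cast_sub this]
          ring
      have hsum' : ∑ e, μ' e = m := by
        have hz : ∑ e, (μ' e : ℤ) = (m : ℤ) := by
          have hsplit : ∀ e : Fin (2*n), (μ' e : ℤ)
              = (μ e : ℤ) + (if e.val % 2 = 0 then -(μ e₀ : ℤ) else (μ e₀ : ℤ)) := by
            intro e
            by_cases he : e.val % 2 = 0
            · simp only [hμ', if_pos he]
              push_cast [Nat.cast_sub (hmin e he)]
              ring
            · simp only [hμ', if_neg he]
              push_cast
              ring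
          simp_rw [hsplit, Finset.sum_add_distrib, Finset.sum_ite, Finset.sum_const,
            cardE hdvd, cardO hdvd]
          have hc : ∑ e : Fin (2*n), (μ e : ℤ) = (m : ℤ) := by
            exact_mod_cast congrArg (Nat.cast (R := ℤ)) hsum
          rw [hc]
          simp
        exact_mod_cast hz
      refine ⟨⟨μ', hsum', ⟨e₀, he₀, by simp [hμ', if_pos he₀]⟩⟩, ?_⟩
      apply Subtype.ext
      funext k
      simp only
      rw [hkey k, ← hrec k]
  rw [key]
  set A : ℕ → Finset (Fin (2*n) → ℕ) := fun l => Finset.Nat.antidiagonalTuple (2*n) l with hA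
  set Sm : Finset (Fin (2*n) → ℕ) :=
    (A m).filter (fun μ => ∃ e : Fin (2*n), e.val % 2 = 0 ∧ μ e = 0) with hSm
  have hTS : Nat.card T = Sm.card := by
    rw [hT, Nat.card_congr (Equiv.subtypeEquivRight (q := fun μ => μ ∈ Sm) ?_)]
    · rw [Nat.card_eq_fintype_card, Fintype.card_coe]
    · intro μ
      simp only [hSm, Finset.mem_filter, hA, Finset.Nat.mem_antidiagonalTuple]
  rw [hTS]
  have hAcard : ∀ l, (A l).card = (2*n + l - 1).choose l := by
    intro l
    have h1 := Nat.card_congr (Equiv.subtypeEquivRight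
      (p := fun μ : Fin (2*n) → ℕ => μ ∈ A l) (q := fun μ : Fin (2*n) → ℕ => ∑ i, μ i = l)
      (fun μ => Finset.Nat.mem_antidiagonalTuple))
    rw [Nat.card_eq_fintype_card, Fintype.card_coe, stars_and_bars (2*n) l] at h1
    exact h1
  set Bm : Finset (Fin (2*n) → ℕ) :=
    (A m).filter (fun μ => ¬ ∃ e : Fin (2*n), e.val % 2 = 0 ∧ μ e = 0) with hBm
  have hsplit : Sm.card + Bm.card = (A m).card :=
    Finset.card_filter_add_card_filter_not _
  set ind : Fin (2*n) → ℕ := fun e => if e.val % 2 = 0 then 1 else 0 with hind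
  have hindsum : ∑ e, ind e = n := by
    simp only [hind]
    rw [Finset.sum_ite, Finset.sum_const, Finset.sum_const, cardE hdvd, smul_eq_mul, smul_eq_mul]
    omega
  have hindle : ∀ μ : Fin (2*n) → ℕ, (∀ e : Fin (2*n), e.val % 2 = 0 → μ e ≠ 0) →
      ∀ e ∈ (univ : Finset (Fin (2*n))), ind e ≤ μ e := by
    intro μ h e _
    by_cases he : e.val % 2 = 0
    · simp only [hind, if_pos he]
      exact Nat.one_le_iff_ne_zero.mpr (h e he)
    · simp [hind, if_neg he]
  have hBcard : Bm.card = (m + n - 1).choose (2*n - 1) := by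
    rcases Nat.lt_or_ge m n with hmn | hmn
    · have hBempty : Bm = ∅ := by
        rw [Finset.eq_empty_iff_forall_notMem]
        intro μ hμ
        rw [hBm, Finset.mem_filter] at hμ
        obtain ⟨hμA, hμne⟩ := hμ
        push_neg at hμne
        have h1 : ∑ e, μ e = m := Finset.Nat.mem_antidiagonalTuple.mp hμA
        have h3 : ∑ e, ind e ≤ ∑ e, μ e := Finset.sum_le_sum (hindle μ hμne)
        rw [hindsum, h1] at h3
        omega
      rw [hBempty, Finset.card_empty]
      exact (Nat.choose_eq_zero_of_lt (by omega)).symm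
    · have hBc : (A (m - n)).card = Bm.card := by
        refine Finset.card_bij' (fun ν _ => ν + ind) (fun μ _ => μ - ind) ?_ ?_ ?_ ?_
        · intro ν hν
          have h1 : ∑ i, ν i = m - n := Finset.Nat.mem_antidiagonalTuple.mp hν
          show ν + ind ∈ Bm
          simp only [hBm, hA, Finset.mem_filter, Finset.Nat.mem_antidiagonalTuple]
          constructor
          · simp only [Pi.add_apply]
            rw [Finset.sum_add_distrib, h1, hindsum]
            omega
          · push_neg
            intro e he
            simp only [Pi.add_apply, hind, if_pos he]
            omega
        · intro μ hμ
          simp only [hBm, hA, Finset.mem_filter, Finset.Nat.mem_antidiagonalTuple] at hμ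
          obtain ⟨h1, hμne⟩ := hμ
          push_neg at hμne
          show μ - ind ∈ A (m - n)
          simp only [hA, Finset.Nat.mem_antidiagonalTuple]
          simp only [Pi.sub_apply]
          rw [Finset.sum_tsub_distrib _ (hindle μ hμne), h1, hindsum]
        · intro ν _
          show ν + ind - ind = ν
          funext e
          simp only [Pi.add_apply, Pi.sub_apply]
          omega
        · intro μ hμ
          simp only [hBm, hA, Finset.mem_filter, Finset.Nat.mem_antidiagonalTuple] at hμ
          push_neg at hμ
          show μ - ind + ind = μ
          funext e
          simp only [Pi.add_apply, Pi.sub_apply]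
          by_cases he : e.val % 2 = 0
          · have := Nat.one_le_iff_ne_zero.mpr (hμ.2 e he)
            simp only [hind, if_pos he]
            omega
          · simp [hind, if_neg he]
      rw [← hBc, hAcard]
      rw [show 2*n + (m - n) - 1 = m + n - 1 by omega]
      rw [show 2*n - 1 = (m + n - 1) - (m - n) by omega, Nat.choose_symm (by omega)]
  rw [hAcard m] at hsplit
  omega

end Count


/-- The Ehrhart series of the edge polytope of `G`. -/
noncomputable def ehrhartSeries {V : Type*} [Fintype V] (G : SimpleGraph V) : PowerSeries ℚ :=
  PowerSeries.mk fun m => (ehrhartCount G m : ℚ)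

/-- The Ehrhart series of the edge polytope of an even cycle with `2n` edges (`n ≥ 2`)
equals `(1 + t + ⋯ + t^(n-1)) / (1 - t)^(2n-1)`. -/
theorem ehrhartSeries_even_cycle (n : ℕ) (hn : 2 ≤ n) :
    ehrhartSeries (SimpleGraph.cycleGraph (2 * n)) * (1 - PowerSeries.X) ^ (2 * n - 1) =
      ∑ i ∈ Finset.range n, (PowerSeries.X : PowerSeries ℚ) ^ i := by
  set F : PowerSeries ℚ :=
    ((PowerSeries.invOneSubPow ℚ (2*n) : (PowerSeries ℚ)ˣ) : PowerSeries ℚ) with hF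
  have hFval : F = PowerSeries.mk fun m => ((2*n - 1 + m).choose (2*n - 1) : ℚ) := by
    conv_lhs => rw [hF, show 2*n = (2*n - 1) + 1 by omega]
    rw [PowerSeries.invOneSubPow_val_succ_eq_mk_add_choose]
  have hser : ehrhartSeries (SimpleGraph.cycleGraph (2*n)) = (1 - PowerSeries.X ^ n) * F := by
    apply PowerSeries.ext
    intro m
    rw [sub_mul, one_mul, map_sub, hFval, PowerSeries.coeff_mk, PowerSeries.coeff_X_pow_mul',
      ehrhartSeries, PowerSeries.coeff_mk, count_formula n hn m]
    have hsymm : (2*n + m - 1).choose m = (2*n - 1 + m).choose (2*n - 1) := by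
      rw [show 2*n - 1 + m = 2*n + m - 1 by omega,
        show 2*n - 1 = (2*n + m - 1) - m by omega, Nat.choose_symm (by omega)]
    rw [hsymm, Nat.cast_sub (Nat.choose_le_choose (2*n-1) (by omega))]
    by_cases hnm : n ≤ m
    · rw [if_pos hnm, PowerSeries.coeff_mk]
      rw [show 2*n - 1 + (m - n) = m + n - 1 by omega]
    · rw [if_neg hnm,
        show (m + n - 1).choose (2*n - 1) = 0 from Nat.choose_eq_zero_of_lt (by omega),
        Nat.cast_zero]
  have hunit : (1 - PowerSeries.X : PowerSeries ℚ)^(2*n) * F = 1 := by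
    rw [hF, ← PowerSeries.invOneSubPow_inv_eq_one_sub_pow]
    exact (PowerSeries.invOneSubPow ℚ (2*n)).inv_val
  have hgeom : (∑ i ∈ Finset.range n, (PowerSeries.X : PowerSeries ℚ)^i) * (1 - PowerSeries.X)
      = 1 - PowerSeries.X ^ n := by
    have h := geom_sum_mul (PowerSeries.X : PowerSeries ℚ) n
    linear_combination -h
  have hpow : (1 - PowerSeries.X : PowerSeries ℚ)^(2*n)
      = (1 - PowerSeries.X)^(2*n-1) * (1 - PowerSeries.X) := by
    rw [← pow_succ]
    congr 1
    omega
  calc ehrhartSeries (SimpleGraph.cycleGraph (2*n)) * (1 - PowerSeries.X) ^ (2*n - 1)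
      = (1 - PowerSeries.X ^ n) * F * (1 - PowerSeries.X) ^ (2*n - 1) := by rw [hser]
    _ = (∑ i ∈ Finset.range n, (PowerSeries.X : PowerSeries ℚ) ^ i)
        * ((1 - PowerSeries.X)^(2*n) * F) := by rw [← hgeom, hpow]; ring
    _ = ∑ i ∈ Finset.range n, (PowerSeries.X : PowerSeries ℚ) ^ i := by rw [hunit, mul_one]
end

section
/- The Ehrhart series of the edge polytope of an odd cycle with 2n − 1 edges equals 1/(1 − t)^{2n−1}. -/
open Pointwise
open scoped Classical

namespace OddCycleAux

open Fin.NatCast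

variable (k : ℕ)

/-- Indicator vector of the edge `{i, i+1}` of the cycle. -/
noncomputable def chi (i : Fin (2 * k + 3)) : Fin (2 * k + 3) → ℝ :=
  fun v => if v = i ∨ v = i + 1 then 1 else 0

theorem ifCongr' {P Q : Prop} {i1 : Decidable P} {i2 : Decidable Q} (h : P ↔ Q) :
    (@ite ℝ P i1 1 0) = (@ite ℝ Q i2 1 0) := by
  by_cases hp : P
  · rw [if_pos hp, if_pos (h.mp hp)]
  · rw [if_neg hp, if_neg fun hq => hp (h.mpr hq)]

variable {k}

lemma val_one_N : ((1 : Fin (2 * k + 3)) : ℕ) = 1 := by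
  rw [Fin.val_one']
  exact Nat.mod_eq_of_lt (by omega)

lemma one_add_one_ne_zero : (1 + 1 : Fin (2 * k + 3)) ≠ 0 := by
  intro h
  have := congrArg Fin.val h
  rw [Fin.add_def, val_one_N] at this
  simp only [Fin.val_zero] at this
  rw [Nat.mod_eq_of_lt (by omega)] at this
  omega

lemma one_ne_zero_N : (1 : Fin (2 * k + 3)) ≠ 0 := by
  intro h
  have := congrArg Fin.val h
  rw [val_one_N] at this
  simp at this

lemma sub_one_ne_self (v : Fin (2 * k + 3)) : v - 1 ≠ v := by
  intro h
  have : (1 : Fin (2 * k + 3)) = 0 := by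
    have := sub_eq_self.mp h
    exact this
  exact one_ne_zero_N this

lemma filter_eq (v : Fin (2 * k + 3)) :
    Finset.univ.filter (fun i : Fin (2 * k + 3) => v = i ∨ v = i + 1) = {v, v - 1} := by
  ext i
  simp only [Finset.mem_filter, Finset.mem_univ, true_and, Finset.mem_insert,
    Finset.mem_singleton]
  constructor
  · rintro (h | h)
    · exact Or.inl h.symm
    · exact Or.inr (by rw [h]; exact (add_sub_cancel_right i 1).symm)
  · rintro (h | h)
    · exact Or.inl h.symm
    · exact Or.inr (by rw [h, sub_add_cancel])

lemma sum_chi (c : Fin (2 * k + 3) → ℝ) (v : Fin (2 * k + 3)) :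
    ∑ i, c i * chi k i v = c (v - 1) + c v := by
  have h : ∀ i : Fin (2 * k + 3),
      c i * chi k i v = if v = i ∨ v = i + 1 then c i else 0 := by
    intro i
    unfold chi
    split <;> simp
  rw [Finset.sum_congr rfl fun i _ => h i, ← Finset.sum_filter, filter_eq v,
    Finset.sum_pair (Ne.symm (sub_one_ne_self v))]
  ring

lemma chi_injective : Function.Injective (chi k) := by
  intro i j h
  have hi : (if i = j ∨ i = j + 1 then (1:ℝ) else 0) = 1 := by
    have := congrFun h i
    unfold chi at this
    rw [if_pos (Or.inl rfl)] at this
    exact this.symm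
  have hj : (if j = i ∨ j = i + 1 then (1:ℝ) else 0) = 1 := by
    have := congrFun h j
    unfold chi at this
    rw [if_pos (Or.inl rfl)] at this
    exact this
  have hi' : i = j ∨ i = j + 1 := by
    by_contra hc
    rw [if_neg hc] at hi; norm_num at hi
  have hj' : j = i ∨ j = i + 1 := by
    by_contra hc
    rw [if_neg hc] at hj; norm_num at hj
  rcases hi' with h1 | h1
  · exact h1
  rcases hj' with h2 | h2
  · exact h2.symm
  exfalso
  apply one_add_one_ne_zero (k := k)
  have : i = i + (1 + 1) := by
    nth_rewrite 1 [h1, h2]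
    rw [add_assoc]
  exact (left_eq_add.mp this)

lemma edgePolytope_eq :
    edgePolytope (SimpleGraph.cycleGraph (2 * k + 3)) = convexHull ℝ (Set.range (chi k)) := by
  rw [edgePolytope]
  congr 1
  ext x
  constructor
  · rintro ⟨i, j, hadj, rfl⟩
    rw [SimpleGraph.cycleGraph_adj'] at hadj
    rcases hadj with h | h
    · -- (i - j).val = 1, so i = j + 1
      have hij : i = j + 1 := by
        have : i - j = 1 := by
          apply Fin.ext
          rw [h, val_one_N]
        rw [sub_eq_iff_eq_add] at this
        exact this.trans (add_comm 1 j)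
      refine ⟨j, ?_⟩
      funext v
      unfold chi
      rw [hij]
      exact ifCongr' or_comm
    · -- j = i + 1
      have hij : j = i + 1 := by
        have : j - i = 1 := by
          apply Fin.ext
          rw [h, val_one_N]
        rw [sub_eq_iff_eq_add] at this
        exact this.trans (add_comm 1 i)
      refine ⟨i, ?_⟩
      funext v
      unfold chi
      rw [hij]
      exact ifCongr' Iff.rfl
  · rintro ⟨i, rfl⟩
    refine ⟨i, i + 1, ?_, ?_⟩
    · rw [SimpleGraph.cycleGraph_adj']
      right
      rw [add_sub_cancel_left, val_one_N]
    · funext v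
      unfold chi
      exact ifCongr' Iff.rfl

lemma range_chi_eq : Set.range (chi k) = ↑(Finset.univ.image (chi k)) := by
  rw [Finset.coe_image, Finset.coe_univ, Set.image_univ]

lemma natCast_succ_fin (j : ℕ) :
    ((j + 1 : ℕ) : Fin (2 * k + 3)) = (j : Fin (2 * k + 3)) + 1 := by
  push_cast
  ring

/-- The key characterization of lattice points in dilates of the edge polytope of an
odd cycle. -/
lemma mem_dilate_iff (m : ℕ) (x : Fin (2 * k + 3) → ℤ) :
    ((fun v => (x v : ℝ)) ∈ (m : ℝ) • edgePolytope (SimpleGraph.cycleGraph (2 * k + 3))) ↔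
      ∃ μ : Fin (2 * k + 3) → ℕ, (∑ i, μ i = m) ∧ ∀ v, x v = μ (v - 1) + μ v := by
  rw [edgePolytope_eq]
  constructor
  · intro hx
    obtain ⟨y, hy, hxy⟩ := Set.mem_smul_set.mp hx
    rw [range_chi_eq] at hy
    obtain ⟨w, hw0, hw1, hwy⟩ := Finset.mem_convexHull'.mp hy
    have hinj : ∀ a ∈ Finset.univ, ∀ b ∈ Finset.univ, chi k a = chi k b → a = b :=
      fun a _ b _ h => chi_injective h
    set c : Fin (2 * k + 3) → ℝ := fun i => (m : ℝ) * w (chi k i) with hc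
    have hc0 : ∀ i, 0 ≤ c i := fun i =>
      mul_nonneg (Nat.cast_nonneg m)
        (hw0 _ (Finset.mem_image_of_mem _ (Finset.mem_univ i)))
    have hcsum : ∑ i, c i = (m : ℝ) := by
      rw [hc]
      rw [← Finset.mul_sum, ← Finset.sum_image hinj, hw1, mul_one]
    have hx' : ∀ v, (x v : ℝ) = c (v - 1) + c v := by
      intro v
      rw [← sum_chi c v]
      have h1 : (x v : ℝ) = (m : ℝ) * y v := by
        have := congrFun hxy v
        simpa using this.symm
      rw [h1]
      have h2 : y v = ∑ i, w (chi k i) * chi k i v := by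
        rw [← hwy, Finset.sum_image hinj]
        simp [Finset.sum_apply]
      rw [h2, Finset.mul_sum]
      exact Finset.sum_congr rfl fun i _ => by rw [hc]; ring
    -- alternating sums
    set s : Fin (2 * k + 3) → ℤ :=
      fun v => ∑ j ∈ Finset.range (2 * k + 3),
        (-1) ^ j * x (v + 1 + (j : Fin (2 * k + 3))) with hs
    have key : ∀ v, (s v : ℝ) = 2 * c v := by
      intro v
      set g : ℕ → ℝ := fun j => (-1) ^ j * c (v + (j : Fin (2 * k + 3))) with hg
      have hterm : ∀ j : ℕ,
          (((-1 : ℤ) ^ j * x (v + 1 + (j : Fin (2 * k + 3)))) : ℝ) = g j - g (j + 1) := by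
        intro j
        push_cast
        rw [hx' (v + 1 + (j : Fin (2 * k + 3)))]
        have e1 : v + 1 + (j : Fin (2 * k + 3)) - 1 = v + (j : Fin (2 * k + 3)) := by
          rw [add_right_comm, add_sub_cancel_right]
        have e2 : v + (((j + 1 : ℕ)) : Fin (2 * k + 3)) = v + 1 + (j : Fin (2 * k + 3)) := by
          rw [natCast_succ_fin, add_right_comm, add_assoc]
        rw [e1, hg]
        simp only
        rw [e2]
        ring
      have hsum : (s v : ℝ) = ∑ j ∈ Finset.range (2 * k + 3), (g j - g (j + 1)) := by
        rw [hs]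
        push_cast
        refine Finset.sum_congr rfl fun j _ => ?_
        have := hterm j
        push_cast at this ⊢
        exact this
      rw [hsum, Finset.sum_range_sub' g]
      have hg0 : g 0 = c v := by simp [hg]
      have hgN : g (2 * k + 3) = - c v := by
        rw [hg]
        simp only
        rw [Fin.natCast_self, add_zero]
        have : (-1 : ℝ) ^ (2 * k + 3) = -1 := Odd.neg_one_pow ⟨k + 1, by ring⟩
        rw [this]
        ring
      rw [hg0, hgN]
      ring
    have hsum_s : ∑ v, s v = 2 * (m : ℤ) := by
      have : ((∑ v, s v : ℤ) : ℝ) = ((2 * (m : ℤ) : ℤ) : ℝ) := by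
        push_cast
        rw [Finset.sum_congr rfl fun v _ => key v, ← Finset.mul_sum, hcsum]
      exact_mod_cast this
    have hpar : ∀ v, s v + s (v + 1) = 2 * x (v + 1) := by
      intro v
      have hr : ((s v + s (v + 1) : ℤ) : ℝ) = ((2 * x (v + 1) : ℤ) : ℝ) := by
        push_cast
        rw [key v, key (v + 1), hx' (v + 1), add_sub_cancel_right]
        ring
      exact_mod_cast hr
    have hdvd : ∀ v, (2 : ℤ) ∣ s v := by
      have hstep : ∀ v : Fin (2 * k + 3),
          ((s (v + 1) : ZMod 2)) = ((s v : ZMod 2)) := by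
        intro v
        have h := congrArg (fun z : ℤ => (z : ZMod 2)) (hpar v)
        push_cast at h
        have h2 : (2 : ZMod 2) = 0 := by decide
        rw [h2, zero_mul] at h
        have : ((s (v + 1) : ZMod 2)) = -((s v : ZMod 2)) := by linear_combination h
        rw [this, CharTwo.neg_eq]
      have hall : ∀ j : ℕ, ((s ((j : Fin (2 * k + 3))) : ZMod 2)) = ((s 0 : ZMod 2)) := by
        intro j
        induction j with
        | zero => simp
        | succ j ih => rw [natCast_succ_fin, hstep]; exact ih
      have hallv : ∀ v : Fin (2 * k + 3), ((s v : ZMod 2)) = ((s 0 : ZMod 2)) := by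
        intro v
        have := hall v.val
        rwa [Fin.cast_val_eq_self] at this
      have hsum0 : (∑ v, ((s v : ZMod 2))) = 0 := by
        have : ((∑ v, s v : ℤ) : ZMod 2) = ((2 * (m : ℤ) : ℤ) : ZMod 2) := by rw [hsum_s]
        push_cast at this
        rw [show (2 : ZMod 2) = 0 by decide, zero_mul] at this
        exact this
      have hNcast : ((2 * k + 3 : ℕ) : ZMod 2) = 1 := by
        push_cast
        rw [show (2 : ZMod 2) = 0 by decide, show (3 : ZMod 2) = 1 by decide]
        ring
      have hs0 : ((s 0 : ZMod 2)) = 0 := by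
        have : (∑ v : Fin (2 * k + 3), ((s v : ZMod 2))) =
            (2 * k + 3 : ℕ) • ((s 0 : ZMod 2)) := by
          rw [Finset.sum_congr rfl fun v _ => hallv v, Finset.sum_const,
            Finset.card_univ, Fintype.card_fin]
        rw [this] at hsum0
        rw [nsmul_eq_mul, hNcast, one_mul] at hsum0
        exact hsum0
      intro v
      have : ((s v : ZMod 2)) = 0 := by rw [hallv v, hs0]
      exact_mod_cast (ZMod.intCast_zmod_eq_zero_iff_dvd (s v) 2).mp this
    set t : Fin (2 * k + 3) → ℤ := fun v => s v / 2 with ht'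
    have ht : ∀ v, s v = 2 * t v := fun v => (Int.mul_ediv_cancel' (hdvd v)).symm
    have hct : ∀ v, c v = (t v : ℝ) := by
      intro v
      have h1 : (2 : ℝ) * c v = 2 * (t v : ℝ) := by
        rw [← key v, ht v]; push_cast; ring
      linarith
    have ht0 : ∀ v, 0 ≤ t v := by
      intro v
      have := hc0 v
      rw [hct v] at this
      exact_mod_cast this
    refine ⟨fun v => (t v).toNat, ?_, ?_⟩
    · have h1 : ∑ v, t v = (m : ℤ) := by
        have : ((∑ v, t v : ℤ) : ℝ) = ((m : ℝ)) := by
          push_cast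
          rw [← Finset.sum_congr rfl fun v _ => (hct v), hcsum]
        exact_mod_cast this
      have h2 : ((∑ v, (t v).toNat : ℕ) : ℤ) = (m : ℤ) := by
        push_cast
        rw [Finset.sum_congr rfl fun v _ => Int.toNat_of_nonneg (ht0 v)]
        exact h1
      exact_mod_cast h2
    · intro v
      have h1 : (x v : ℝ) = (t (v - 1) : ℝ) + (t v : ℝ) := by
        rw [hx' v, hct (v - 1), hct v]
      have h2 : x v = t (v - 1) + t v := by exact_mod_cast h1
      rw [h2, Int.toNat_of_nonneg (ht0 (v - 1)), Int.toNat_of_nonneg (ht0 v)]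
  · rintro ⟨μ, hμsum, hμ⟩
    by_cases hm : m = 0
    · subst hm
      have hμ0 : ∀ i, μ i = 0 := by
        intro i
        have := Finset.sum_eq_zero_iff.mp hμsum i (Finset.mem_univ i)
        exact this
      refine Set.mem_smul_set.mpr ⟨chi k 0, subset_convexHull ℝ _ ⟨0, rfl⟩, ?_⟩
      funext v
      simp [hμ v, hμ0]
    · have hm' : (m : ℝ) ≠ 0 := Nat.cast_ne_zero.mpr hm
      set y : Fin (2 * k + 3) → ℝ := ∑ i, ((μ i : ℝ) / m) • chi k i with hy'
      have hy : y ∈ convexHull ℝ (Set.range (chi k)) := by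
        apply Convex.sum_mem (convex_convexHull ℝ _)
        · intro i _
          positivity
        · rw [← Finset.sum_div]
          rw [div_eq_one_iff_eq hm']
          exact_mod_cast hμsum
        · intro i _
          exact subset_convexHull ℝ _ ⟨i, rfl⟩
      refine Set.mem_smul_set.mpr ⟨y, hy, ?_⟩
      funext v
      simp only [Pi.smul_apply, smul_eq_mul]
      have hyv : y v = ∑ i, ((μ i : ℝ) / m) * chi k i v := by
        rw [hy']
        simp [Finset.sum_apply]
      rw [hyv, Finset.mul_sum]
      have : ∀ i, (m : ℝ) * (((μ i : ℝ) / m) * chi k i v) = (μ i : ℝ) * chi k i v := by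
        intro i
        field_simp
      rw [Finset.sum_congr rfl fun i _ => this i, sum_chi (fun i => (μ i : ℝ)) v, hμ v]
      push_cast
      ring

variable (k) in
/-- The map sending a weight vector to the corresponding lattice point. -/
noncomputable def psi (m : ℕ) (μ : {μ : Fin (2 * k + 3) → ℕ // ∑ i, μ i = m}) :
    {x : Fin (2 * k + 3) → ℤ //
      (fun v => (x v : ℝ)) ∈ (m : ℝ) • edgePolytope (SimpleGraph.cycleGraph (2 * k + 3))} :=
  ⟨fun v => ((μ.1 (v - 1) + μ.1 v : ℕ) : ℤ),
    (mem_dilate_iff m _).mpr ⟨μ.1, μ.2, fun v => by push_cast; ring⟩⟩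

lemma count_eq (m : ℕ) :
    ehrhartCount (SimpleGraph.cycleGraph (2 * k + 3)) m = (2 * (k + 1) + m).choose m := by
  classical
  have h9 : 2 * k + 3 + m - 1 = 2 * (k + 1) + m := by omega
  have hinj : Function.Injective (psi k m) := by
    intro a b h
    have h' : ∀ v, ((a.1 (v - 1) + a.1 v : ℕ) : ℤ) = ((b.1 (v - 1) + b.1 v : ℕ) : ℤ) :=
      fun v => congrFun (congrArg Subtype.val h) v
    set d : Fin (2 * k + 3) → ℤ := fun v => (a.1 v : ℤ) - b.1 v with hd'
    have hd : ∀ v, d (v + 1) = - d v := by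
      intro v
      have hv := h' (v + 1)
      rw [add_sub_cancel_right] at hv
      simp only [hd']
      push_cast at hv
      omega
    have hpow : ∀ j : ℕ, d ((j : Fin (2 * k + 3))) = (-1) ^ j * d 0 := by
      intro j
      induction j with
      | zero => simp
      | succ j ih => rw [natCast_succ_fin, hd, ih]; ring
    have hd0 : d 0 = 0 := by
      have h3 := hpow (2 * k + 3)
      rw [Fin.natCast_self] at h3
      have hodd : (-1 : ℤ) ^ (2 * k + 3) = -1 := Odd.neg_one_pow ⟨k + 1, by ring⟩
      rw [hodd] at h3
      omega
    have hdv : ∀ v, d v = 0 := by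
      intro v
      have h4 := hpow v.val
      rw [Fin.cast_val_eq_self, hd0] at h4
      simpa using h4
    apply Subtype.ext
    funext v
    have h5 := hdv v
    simp only [hd'] at h5
    omega
  have hsurj : Function.Surjective (psi k m) := by
    rintro ⟨x, hx⟩
    obtain ⟨μ, hμsum, hμ⟩ := (mem_dilate_iff m x).mp hx
    refine ⟨⟨μ, hμsum⟩, ?_⟩
    apply Subtype.ext
    funext v
    show ((μ (v - 1) + μ v : ℕ) : ℤ) = x v
    rw [hμ v]
    push_cast
    ring
  have hcard : ehrhartCount (SimpleGraph.cycleGraph (2 * k + 3)) m =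
      Nat.card {μ : Fin (2 * k + 3) → ℕ // ∑ i, μ i = m} :=
    (Nat.card_congr (Equiv.ofBijective (psi k m) ⟨hinj, hsurj⟩)).symm
  have hB : Nat.card {μ : Fin (2 * k + 3) → ℕ // ∑ i, μ i = m} =
      Fintype.card (Sym (Fin (2 * k + 3)) m) := by
    rw [← Nat.card_eq_fintype_card]
    exact (Nat.card_congr (Sym.equivNatSumOfFintype (Fin (2 * k + 3)) m)).symm
  rw [hcard, hB]
  rw [Sym.card_sym_eq_multichoose]
  rw [Fintype.card_fin]
  rw [Nat.multichoose_eq]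
  rw [h9]

end OddCycleAux

/-- The Ehrhart series of the edge polytope of an odd cycle with `2n - 1` edges
equals `1 / (1 - t)^(2n-1)`. -/
theorem ehrhartSeries_odd_cycle (n : ℕ) (hn : 2 ≤ n) :
    ehrhartSeries (SimpleGraph.cycleGraph (2 * n - 1)) * (1 - PowerSeries.X) ^ (2 * n - 1) =
      1 := by
  obtain ⟨k, rfl⟩ : ∃ k, n = k + 2 := ⟨n - 2, by omega⟩
  have h1 : 2 * (k + 2) - 1 = 2 * k + 3 := by omega
  rw [h1]
  have h2 : ehrhartSeries (SimpleGraph.cycleGraph (2 * k + 3)) =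
      PowerSeries.mk fun m => ((2 * (k + 1) + m).choose (2 * (k + 1)) : ℚ) := by
    apply PowerSeries.ext
    intro m
    rw [ehrhartSeries, PowerSeries.coeff_mk, PowerSeries.coeff_mk,
      OddCycleAux.count_eq m, Nat.choose_symm_add]
  rw [h2, show 2 * k + 3 = 2 * (k + 1) + 1 by ring]
  exact PowerSeries.mk_add_choose_mul_one_sub_pow_eq_one ℚ (2 * (k + 1))
end

section
/- Let α be a root of unity and let f be a nonzero polynomial of the form f(x) = v(x)·Π_{i=1}^{a}(x+i) where every complex root of v lies on the vertical line Re(x) = −(a+1)/2. Then the polynomial g(x) = f(x−1) − α·f(x) has the form g(x) = w(x)·Π_{i=1}^{a−1}(x+i) where every root of w lies on Re(x) = −a/2. -/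
open Polynomial

private lemma ns_diff (z s w : ℂ) (him : w.im = s.im) :
    Complex.normSq (z - w) - Complex.normSq (z - s)
      = (s.re - w.re) * (2 * z.re - s.re - w.re) := by
  simp only [Complex.normSq_apply, Complex.sub_re, Complex.sub_im, him]
  ring

private lemma norm_le_of_nsq {x y : ℂ} (h : Complex.normSq x ≤ Complex.normSq y) :
    ‖x‖ ≤ ‖y‖ := by
  have := Real.sqrt_le_sqrt h
  simpa [Complex.norm_def] using this

private lemma norm_lt_of_nsq {x y : ℂ} (h : Complex.normSq x < Complex.normSq y) :
    ‖x‖ < ‖y‖ := by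
  apply lt_of_pow_lt_pow_left₀ 2 (norm_nonneg y)
  rwa [Complex.sq_norm, Complex.sq_norm]

private lemma norm_msprod (m : Multiset ℂ) : ‖m.prod‖ = (m.map fun x => ‖x‖).prod := by
  induction m using Multiset.induction_on with
  | empty => simp
  | cons a s ih => simp [norm_mul, ih]

private lemma ms_prod_le (m : Multiset ℂ) (f g : ℂ → ℝ) (h0 : ∀ r ∈ m, 0 ≤ f r)
    (h : ∀ r ∈ m, f r ≤ g r) : (m.map f).prod ≤ (m.map g).prod := by
  induction m using Multiset.induction_on with
  | empty => simp
  | cons a s ih =>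
    simp only [Multiset.map_cons, Multiset.prod_cons]
    have hf : 0 ≤ (Multiset.map f s).prod := by
      apply Multiset.prod_nonneg
      intro x hx
      obtain ⟨r, hr, rfl⟩ := Multiset.mem_map.mp hx
      exact h0 r (Multiset.mem_cons_of_mem hr)
    exact mul_le_mul (h a (Multiset.mem_cons_self a s))
      (ih (fun r hr => h0 r (Multiset.mem_cons_of_mem hr))
          (fun r hr => h r (Multiset.mem_cons_of_mem hr))) hf
      (le_trans (h0 a (Multiset.mem_cons_self a s)) (h a (Multiset.mem_cons_self a s)))

private lemma ms_prod_pos (m : Multiset ℂ) (f : ℂ → ℝ) (h : ∀ r ∈ m, 0 < f r) :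
    0 < (m.map f).prod := by
  induction m using Multiset.induction_on with
  | empty => simp
  | cons a s ih =>
    simp only [Multiset.map_cons, Multiset.prod_cons]
    exact mul_pos (h a (Multiset.mem_cons_self a s))
      (ih fun r hr => h r (Multiset.mem_cons_of_mem hr))

/-- The analytic core: the polynomial `x·v(x-1) - α(x+a)v(x)` has no zero off the
critical line `Re = -a/2`. -/
private lemma rv_core (a : ℕ) (ha : 1 ≤ a) (α : ℂ) (hα1 : ‖α‖ = 1) (v : Polynomial ℂ)
    (hv0 : v ≠ 0) (hv : ∀ z : ℂ, v.IsRoot z → z.re = -((a : ℝ) + 1) / 2)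
    (z : ℂ) (hz : z.re ≠ -(a : ℝ) / 2) :
    z * v.eval (z - 1) - α * ((z + (a : ℂ)) * v.eval z) ≠ 0 := by
  intro h
  have heq : ‖z‖ * ‖v.eval (z - 1)‖ = ‖z + (a : ℂ)‖ * ‖v.eval z‖ := by
    have h2 := congrArg norm (sub_eq_zero.mp h)
    simpa [norm_mul, hα1, mul_assoc] using h2
  set c := v.leadingCoeff with hc
  have hcne : c ≠ 0 := leadingCoeff_ne_zero.mpr hv0
  have hcpos : 0 < ‖c‖ := norm_pos_iff.mpr hcne
  have hsplit : v = C c * (Multiset.map (fun r => X - C r) v.roots).prod :=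
    Splits.eq_prod_roots (IsAlgClosed.splits v)
  have hev : ∀ y : ℂ, ‖v.eval y‖ = ‖c‖ * ((v.roots.map fun r => ‖y - r‖).prod) := by
    intro y
    conv_lhs => rw [hsplit]
    rw [eval_mul, eval_C, eval_multiset_prod, Multiset.map_map, norm_mul, norm_msprod,
      Multiset.map_map]
    simp [Function.comp]
  have hroots : ∀ r ∈ v.roots, r.re = -((a : ℝ) + 1) / 2 := fun r hr =>
    hv r (isRoot_of_mem_roots hr)
  have ha1 : (1 : ℝ) ≤ (a : ℝ) := by exact_mod_cast ha
  have hare : ((a : ℂ)).re = (a : ℝ) := by simp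
  -- norms of the linear factors
  set P := (v.roots.map fun r => ‖z - 1 - r‖).prod with hP
  set Q := (v.roots.map fun r => ‖z - r‖).prod with hQ
  rw [hev, hev] at heq
  -- key normSq computations
  have hza : Complex.normSq (z + (a : ℂ)) - Complex.normSq z = (a : ℝ) * (2 * z.re + a) := by
    have h3 := ns_diff z 0 (-(a : ℂ)) (by simp)
    simp only [sub_zero, sub_neg_eq_add, Complex.neg_re, Complex.natCast_re,
      Complex.zero_re] at h3
    linarith [h3]
  have hfac : ∀ r ∈ v.roots,
      Complex.normSq (z - 1 - r) - Complex.normSq (z - r) = -(2 * z.re + a) := by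
    intro r hr
    have hre := hroots r hr
    have h3 := ns_diff z r (r + 1) (by simp)
    have hre1 : (r + 1).re = r.re + 1 := by simp
    have hzr : z - 1 - r = z - (r + 1) := by ring
    rw [hzr, h3, hre1, hre]
    ring
  rcases lt_or_gt_of_ne hz with hlt | hgt
  · -- z.re < -a/2
    have h2 : 2 * z.re + (a : ℝ) < 0 := by linarith
    have hQP : Q ≤ P := by
      apply ms_prod_le
      · intro r _; positivity
      · intro r hr
        apply norm_le_of_nsq
        have := hfac r hr
        linarith
    have hPpos : 0 < P := by
      apply ms_prod_pos
      intro r hr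
      have hre := hroots r hr
      have hne : z - 1 - r ≠ 0 := by
        intro h4
        have : z.re - 1 - r.re = 0 := by
          have := congrArg Complex.re h4
          simpa [Complex.sub_re, Complex.one_re] using this
        rw [hre] at this
        linarith
      simpa [norm_pos_iff] using hne
    have hza2 : ‖z + (a : ℂ)‖ < ‖z‖ := by
      apply norm_lt_of_nsq
      nlinarith
    have s1 : ‖z + (a : ℂ)‖ * (‖c‖ * Q) ≤ ‖z + (a : ℂ)‖ * (‖c‖ * P) :=
      mul_le_mul_of_nonneg_left (mul_le_mul_of_nonneg_left hQP hcpos.le) (norm_nonneg _)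
    have s2 : ‖z + (a : ℂ)‖ * (‖c‖ * P) < ‖z‖ * (‖c‖ * P) :=
      mul_lt_mul_of_pos_right hza2 (mul_pos hcpos hPpos)
    linarith
  · -- z.re > -a/2
    have h2 : 0 < 2 * z.re + (a : ℝ) := by linarith
    have hPQ : P ≤ Q := by
      apply ms_prod_le
      · intro r _; positivity
      · intro r hr
        apply norm_le_of_nsq
        have := hfac r hr
        linarith
    have hQpos : 0 < Q := by
      apply ms_prod_pos
      intro r hr
      have hre := hroots r hr
      have hne : z - r ≠ 0 := by
        intro h4
        have : z.re - r.re = 0 := by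
          have := congrArg Complex.re h4
          simpa [Complex.sub_re] using this
        rw [hre] at this
        linarith
      simpa [norm_pos_iff] using hne
    have hza2 : ‖z‖ < ‖z + (a : ℂ)‖ := by
      apply norm_lt_of_nsq
      nlinarith
    have s1 : ‖z‖ * (‖c‖ * P) ≤ ‖z‖ * (‖c‖ * Q) :=
      mul_le_mul_of_nonneg_left (mul_le_mul_of_nonneg_left hPQ hcpos.le) (norm_nonneg _)
    have s2 : ‖z‖ * (‖c‖ * Q) < ‖z + (a : ℂ)‖ * (‖c‖ * Q) :=
      mul_lt_mul_of_pos_right hza2 (mul_pos hcpos hQpos)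
    linarith

private lemma prodIcc_shift (b : ℕ) :
    (∏ i ∈ Finset.Icc 1 (b + 1), (X + C ((i : ℕ) : ℂ) - C 1))
      = X * ∏ i ∈ Finset.Icc 1 b, (X + C ((i : ℕ) : ℂ)) := by
  induction b with
  | zero => simp
  | succ n ih =>
    rw [Finset.prod_Icc_succ_top (by omega), ih,
      Finset.prod_Icc_succ_top (show 1 ≤ n + 1 by omega)]
    push_cast
    simp only [map_add, map_one, map_ofNat]
    ring

/-- The lemma of Rodriguez-Villegas: let `α` be a root of unity and `f` a nonzero complex
polynomial of the form `f(x) = v(x)·Π_{i=1}^{a}(x+i)` with every root of `v` on the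
vertical line `Re(x) = -(a+1)/2`.  Then `g(x) = f(x-1) - α·f(x)` is nonzero of the form
`g(x) = w(x)·Π_{i=1}^{a-1}(x+i)` with every root of `w` on `Re(x) = -a/2`. -/
theorem rodriguez_villegas (a : ℕ) (ha : 1 ≤ a) (α : ℂ) (hα : ∃ n : ℕ, 0 < n ∧ α ^ n = 1)
    (f v : Polynomial ℂ) (hf0 : f ≠ 0)
    (hfv : f = v * ∏ i ∈ Finset.Icc 1 a, (X + C (i : ℂ)))
    (hv : ∀ z : ℂ, v.IsRoot z → z.re = -((a : ℝ) + 1) / 2) :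
    f.comp (X - C 1) - C α * f ≠ 0 ∧
      ∃ w : Polynomial ℂ,
        f.comp (X - C 1) - C α * f = w * ∏ i ∈ Finset.Icc 1 (a - 1), (X + C (i : ℂ)) ∧
          ∀ z : ℂ, w.IsRoot z → z.re = -(a : ℝ) / 2 := by
  obtain ⟨n, hn, hαn⟩ := hα
  have hα1 : ‖α‖ = 1 := by
    have hnorm : ‖α‖ ^ n = 1 := by rw [← norm_pow, hαn, norm_one]
    rcases lt_trichotomy ‖α‖ 1 with h | h | h
    · exfalso
      have := pow_lt_one₀ (norm_nonneg α) h hn.ne'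
      linarith
    · exact h
    · exfalso
      have := one_lt_pow₀ h hn.ne'
      linarith
  obtain ⟨b, rfl⟩ : ∃ b, a = b + 1 := ⟨a - 1, by omega⟩
  have hv0 : v ≠ 0 := by
    rintro rfl
    exact hf0 (by simp [hfv])
  set Pb := ∏ i ∈ Finset.Icc 1 b, (X + C ((i : ℕ) : ℂ)) with hPbdef
  set w := X * v.comp (X - C 1) - C α * ((X + C (((b + 1 : ℕ)) : ℂ)) * v) with hwdef
  have hfact : f.comp (X - C 1) - C α * f = w * Pb := by
    rw [hfv, mul_comp, prod_comp]
    have h1 : ∀ i ∈ Finset.Icc 1 (b + 1),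
        (X + C ((i : ℕ) : ℂ)).comp (X - C 1) = X + C ((i : ℕ) : ℂ) - C 1 := by
      intro i _
      simp only [add_comp, X_comp, C_comp]
      ring
    rw [Finset.prod_congr rfl h1, prodIcc_shift b,
      Finset.prod_Icc_succ_top (by omega : 1 ≤ b + 1)]
    rw [hwdef, hPbdef]
    ring
  have hweval : ∀ z : ℂ,
      w.eval z = z * v.eval (z - 1) - α * ((z + ((b + 1 : ℕ) : ℂ)) * v.eval z) := by
    intro z
    simp [hwdef, eval_comp]
  have hwne : w ≠ 0 := by
    intro h0
    have hcore := rv_core (b + 1) (by omega) α hα1 v hv0 hv 1 (by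
      have : (0 : ℝ) < ((b : ℝ) + 1) := by positivity
      simp only [Complex.one_re]
      push_cast
      intro hcon
      linarith)
    apply hcore
    rw [← hweval 1, h0, eval_zero]
  have hPbne : Pb ≠ 0 := by
    apply Monic.ne_zero
    apply monic_prod_of_monic
    intro i _
    exact monic_X_add_C _
  refine ⟨?_, w, ?_, ?_⟩
  · rw [hfact]
    exact mul_ne_zero hwne hPbne
  · rw [hfact, Nat.add_sub_cancel]
  · intro z hz
    by_contra hne
    exact rv_core (b + 1) (by omega) α hα1 v hv0 hv z hne (by rw [← hweval z]; exact hz)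
end

section
/- In the polynomial ring K[e₀,…,e₇,θ] with the lexicographic order θ > e₀ > ⋯ > e₇, the four binomials g₁ = e₀e₂e₄²e₆ − e₁e₃²e₅e₇, g₂ = θ² − e₀e₁e₂e₅e₆e₇, g₃ = θe₃ − e₀e₂e₄e₆, g₄ = θe₄ − e₁e₃e₅e₇ form a Gröbner basis of the ideal they generate. -/
open MvPolynomial
open scoped Classical

/-- The lex leading monomial (as an element of `WithBot`) of a polynomial in
`K[θ, e₀, …, e₇]`, the variables being indexed by `Fin 9` with `θ` the variable `0`
(most significant) and `eᵢ` the variable `i+1`, so that the lexicographic order has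
`θ > e₀ > ⋯ > e₇`. -/
noncomputable def lexLeadMon {K : Type*} [Field K] (f : MvPolynomial (Fin 9) K) :
    WithBot (Lex (Fin 9 →₀ ℕ)) :=
  (f.support.image toLex).max

/-- `B` is a Gröbner basis of the ideal `I` for the lexicographic order: `B ⊆ I` and for
every nonzero `f ∈ I` the lex leading monomial of some `g ∈ B` divides the lex leading
monomial of `f` (divisibility of monomials being `≤` of exponent vectors). -/
def IsLexGroebnerBasis {K : Type*} [Field K] (B : Finset (MvPolynomial (Fin 9) K))
    (I : Ideal (MvPolynomial (Fin 9) K)) : Prop :=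
  (B : Set (MvPolynomial (Fin 9) K)) ⊆ I ∧
    ∀ f ∈ I, f ≠ 0 → ∃ g ∈ B, ∃ mg mf : Fin 9 →₀ ℕ,
      (↑(toLex mg) : WithBot (Lex (Fin 9 →₀ ℕ))) = lexLeadMon g ∧
        (↑(toLex mf) : WithBot (Lex (Fin 9 →₀ ℕ))) = lexLeadMon f ∧ mg ≤ mf

namespace Bowtie

/-! ### The toric degree map -/

def wrow : Fin 9 → Fin 7 → ℕ :=
  ![![1,1,1,0,1,1,1], ![1,0,1,0,0,0,0], ![1,1,0,0,0,0,0], ![0,1,1,0,0,0,0],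
    ![0,0,1,1,0,0,0], ![0,0,0,1,1,0,0], ![0,0,0,0,1,1,0], ![0,0,0,0,0,1,1],
    ![0,0,0,0,1,0,1]]

noncomputable def row (i : Fin 9) : Fin 7 →₀ ℕ := Finsupp.equivFunOnFinite.symm (wrow i)

@[simp] lemma row_apply (i : Fin 9) (v : Fin 7) : row i v = wrow i v := rfl

noncomputable def degA (s : Fin 9 →₀ ℕ) : Fin 7 →₀ ℕ := s.sum fun n e => e • row n

lemma degA_apply (s : Fin 9 →₀ ℕ) (v : Fin 7) :
    degA s v = ∑ i : Fin 9, s i * wrow i v := by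
  rw [degA, Finsupp.sum_apply, Finsupp.sum_fintype]
  · simp
  · intro i; simp

lemma degA_val (s : Fin 9 →₀ ℕ) (v : Fin 7) :
    degA s v = ![s 0 + s 1 + s 2, s 0 + s 2 + s 3, s 0 + s 1 + s 3 + s 4, s 4 + s 5,
      s 0 + s 5 + s 6 + s 8, s 0 + s 6 + s 7, s 0 + s 7 + s 8] v := by
  rw [degA_apply]
  fin_cases v <;>
    simp [Fin.sum_univ_succ, wrow, Matrix.cons_val_succ,
      show (5:Fin 7) = Fin.succ 4 by decide, show (6:Fin 7) = Fin.succ 5 by decide,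
      show (5:Fin 6) = Fin.succ 4 by decide,
      show (Fin.succ (2:Fin 8) : Fin 9) = 3 by decide,
      show ((Fin.succ (2:Fin 7)).succ : Fin 9) = 4 by decide,
      show ((Fin.succ (2:Fin 6)).succ.succ : Fin 9) = 5 by decide,
      show ((Fin.succ (2:Fin 5)).succ.succ.succ : Fin 9) = 6 by decide,
      show ((Fin.succ (2:Fin 4)).succ.succ.succ.succ : Fin 9) = 7 by decide,
      show ((Fin.succ (2:Fin 3)).succ.succ.succ.succ.succ : Fin 9) = 8 by decide] <;>
    ring

lemma degA_val0 (s : Fin 9 →₀ ℕ) : degA s 0 = s 0 + s 1 + s 2 := by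
  rw [degA_val]; rfl
lemma degA_val1 (s : Fin 9 →₀ ℕ) : degA s 1 = s 0 + s 2 + s 3 := by
  rw [degA_val]; rfl
lemma degA_val2 (s : Fin 9 →₀ ℕ) : degA s 2 = s 0 + s 1 + s 3 + s 4 := by
  rw [degA_val]; rfl
lemma degA_val3 (s : Fin 9 →₀ ℕ) : degA s 3 = s 4 + s 5 := by
  rw [degA_val]; rfl
lemma degA_val4 (s : Fin 9 →₀ ℕ) : degA s 4 = s 0 + s 5 + s 6 + s 8 := by
  rw [degA_val]; rfl
lemma degA_val5 (s : Fin 9 →₀ ℕ) : degA s 5 = s 0 + s 6 + s 7 := by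
  rw [degA_val]; rfl
lemma degA_val6 (s : Fin 9 →₀ ℕ) : degA s 6 = s 0 + s 7 + s 8 := by
  rw [degA_val]; rfl

/-! ### The monomial algebra map φ -/

section Field
variable {K : Type*} [Field K]

noncomputable def φ : MvPolynomial (Fin 9) K →ₐ[K] MvPolynomial (Fin 7) K :=
  aeval fun i => monomial (row i) 1

lemma monomial_prod {τ : Type*} (t : Finset τ) (g : τ → (Fin 7 →₀ ℕ)) :
    (∏ i ∈ t, (monomial (g i) (1:K))) = monomial (∑ i ∈ t, g i) 1 := by
  induction t using Finset.induction with
  | empty => simp [monomial_zero']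
  | insert _ _ h ih =>
      rename_i a t'
      rw [Finset.prod_insert h, Finset.sum_insert h, ih, monomial_mul, one_mul]

lemma phi_monomial (s : Fin 9 →₀ ℕ) (c : K) : φ (monomial s c) = monomial (degA s) c := by
  rw [φ, aeval_monomial]
  have : (s.prod fun n e => (monomial (row n) (1:K)) ^ e) = monomial (degA s) 1 := by
    rw [Finsupp.prod]
    calc (∏ n ∈ s.support, (monomial (row n) (1:K)) ^ s n)
        = ∏ n ∈ s.support, monomial (s n • row n) 1 := by
          apply Finset.prod_congr rfl; intro i _; rw [monomial_pow, one_pow]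
      _ = monomial (∑ n ∈ s.support, s n • row n) 1 := monomial_prod _ _
      _ = monomial (degA s) 1 := rfl
  rw [this, algebraMap_eq, C_mul_monomial, mul_one]

lemma exists_partner (f : MvPolynomial (Fin 9) K) (hf : φ f = 0) (m : Fin 9 →₀ ℕ)
    (hm : m ∈ f.support) :
    ∃ s ∈ f.support, s ≠ m ∧ degA s = degA m := by
  by_contra hcon
  push_neg at hcon
  have key : coeff (degA m) (φ f) = coeff m f := by
    conv_lhs => rw [← support_sum_monomial_coeff f]
    rw [map_sum]
    simp_rw [phi_monomial]
    rw [coeff_sum]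
    rw [Finset.sum_eq_single_of_mem m hm]
    · simp [coeff_monomial]
    · intro s hs hsne
      rw [coeff_monomial, if_neg]
      intro h
      exact hcon s hs hsne h
  rw [hf] at key
  simp only [coeff_zero] at key
  exact (MvPolynomial.mem_support_iff.mp hm) key.symm

/-! ### binomial supports and lead monomials -/

lemma support_binom {a b : Fin 9 →₀ ℕ} (h : a ≠ b) :
    (monomial a (1:K) - monomial b 1).support = {a, b} := by
  ext x
  simp only [MvPolynomial.mem_support_iff, coeff_sub, coeff_monomial,
    Finset.mem_insert, Finset.mem_singleton]
  by_cases hx : a = x <;> by_cases hx' : b = x <;> simp_all [sub_eq_zero] <;>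
    first
      | (exact ⟨fun h' => hx h'.symm, fun h' => hx' h'.symm⟩)
      | (intro h'; exact h (hx.trans h'.symm))
      | (intro h'; exact h (h'.symm.trans hx'.symm))

lemma leadMon_binom {a b : Fin 9 →₀ ℕ} (h : toLex b < toLex a) :
    lexLeadMon (monomial a (1:K) - monomial b 1)
      = ((toLex a : Lex (Fin 9 →₀ ℕ)) : WithBot (Lex (Fin 9 →₀ ℕ))) := by
  have hne : a ≠ b := by rintro rfl; exact lt_irrefl _ h
  rw [lexLeadMon, support_binom hne]
  apply le_antisymm
  · apply Finset.max_le
    intro y hy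
    simp only [Finset.mem_image, Finset.mem_insert, Finset.mem_singleton] at hy
    obtain ⟨z, hz | hz, rfl⟩ := hy
    · subst hz; exact le_rfl
    · subst hz; exact_mod_cast le_of_lt h
  · apply Finset.le_max
    simp only [Finset.mem_image]
    exact ⟨a, by simp, rfl⟩

end Field

/-! ### the eight exponent vectors -/

noncomputable def sgl (i : Fin 9) (k : ℕ) : Fin 9 →₀ ℕ := Finsupp.single i k

noncomputable def α₁ : Fin 9 →₀ ℕ := sgl 1 1 + sgl 3 1 + sgl 5 2 + sgl 7 1
noncomputable def β₁ : Fin 9 →₀ ℕ := sgl 2 1 + sgl 4 2 + sgl 6 1 + sgl 8 1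
noncomputable def α₂ : Fin 9 →₀ ℕ := sgl 0 2
noncomputable def β₂ : Fin 9 →₀ ℕ := sgl 1 1 + sgl 2 1 + sgl 3 1 + sgl 6 1 + sgl 7 1 + sgl 8 1
noncomputable def α₃ : Fin 9 →₀ ℕ := sgl 0 1 + sgl 4 1
noncomputable def β₃ : Fin 9 →₀ ℕ := sgl 1 1 + sgl 3 1 + sgl 5 1 + sgl 7 1
noncomputable def α₄ : Fin 9 →₀ ℕ := sgl 0 1 + sgl 5 1
noncomputable def β₄ : Fin 9 →₀ ℕ := sgl 2 1 + sgl 4 1 + sgl 6 1 + sgl 8 1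

lemma α₁_apply : ∀ v, α₁ v = ![0,1,0,1,0,2,0,1,0] v := by
  intro v; fin_cases v <;> simp [α₁, sgl, Finsupp.single_apply] <;> decide
lemma β₁_apply : ∀ v, β₁ v = ![0,0,1,0,2,0,1,0,1] v := by
  intro v; fin_cases v <;> simp [β₁, sgl, Finsupp.single_apply] <;> decide
lemma α₂_apply : ∀ v, α₂ v = ![2,0,0,0,0,0,0,0,0] v := by
  intro v; fin_cases v <;> simp [α₂, sgl, Finsupp.single_apply] <;> decide
lemma β₂_apply : ∀ v, β₂ v = ![0,1,1,1,0,0,1,1,1] v := by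
  intro v; fin_cases v <;> simp [β₂, sgl, Finsupp.single_apply] <;> decide
lemma α₃_apply : ∀ v, α₃ v = ![1,0,0,0,1,0,0,0,0] v := by
  intro v; fin_cases v <;> simp [α₃, sgl, Finsupp.single_apply] <;> decide
lemma β₃_apply : ∀ v, β₃ v = ![0,1,0,1,0,1,0,1,0] v := by
  intro v; fin_cases v <;> simp [β₃, sgl, Finsupp.single_apply] <;> decide
lemma α₄_apply : ∀ v, α₄ v = ![1,0,0,0,0,1,0,0,0] v := by
  intro v; fin_cases v <;> simp [α₄, sgl, Finsupp.single_apply] <;> decide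
lemma β₄_apply : ∀ v, β₄ v = ![0,0,1,0,1,0,1,0,1] v := by
  intro v; fin_cases v <;> simp [β₄, sgl, Finsupp.single_apply] <;> decide

lemma lt₁ : toLex β₁ < toLex α₁ := by
  rw [Finsupp.Lex.lt_iff]
  refine ⟨1, fun j hj => ?_, ?_⟩
  · have : j = 0 := by omega
    subst this; simp [α₁_apply 0, β₁_apply 0]
  · simp [α₁_apply 1, β₁_apply 1]

lemma lt₂ : toLex β₂ < toLex α₂ := by
  rw [Finsupp.Lex.lt_iff]
  refine ⟨0, fun j hj => absurd hj (by simp), ?_⟩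
  · simp [α₂_apply 0, β₂_apply 0]

lemma lt₃ : toLex β₃ < toLex α₃ := by
  rw [Finsupp.Lex.lt_iff]
  refine ⟨0, fun j hj => absurd hj (by simp), ?_⟩
  · simp [α₃_apply 0, β₃_apply 0]

lemma lt₄ : toLex β₄ < toLex α₄ := by
  rw [Finsupp.Lex.lt_iff]
  refine ⟨0, fun j hj => absurd hj (by simp), ?_⟩
  · simp [α₄_apply 0, β₄_apply 0]

/-! ### vanishing of φ on the binomials -/

lemma degA_eq₁ : degA α₁ = degA β₁ := by
  ext v; rw [degA_val, degA_val]
  fin_cases v <;> simp [α₁_apply, β₁_apply] <;> decide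
lemma degA_eq₂ : degA α₂ = degA β₂ := by
  ext v; rw [degA_val, degA_val]
  fin_cases v <;> simp [α₂_apply, β₂_apply] <;> decide
lemma degA_eq₃ : degA α₃ = degA β₃ := by
  ext v; rw [degA_val, degA_val]
  fin_cases v <;> simp [α₃_apply, β₃_apply] <;> decide
lemma degA_eq₄ : degA α₄ = degA β₄ := by
  ext v; rw [degA_val, degA_val]
  fin_cases v <;> simp [α₄_apply, β₄_apply] <;> decide

section Field2
variable {K : Type*} [Field K]

lemma hG₁ : (X 1 * X 3 * X 5 ^ 2 * X 7 : MvPolynomial (Fin 9) K)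
    - X 2 * X 4 ^ 2 * X 6 * X 8 = monomial α₁ 1 - monomial β₁ 1 := by
  simp [α₁, β₁, sgl, X, monomial_mul, monomial_pow]
lemma hG₂ : (X 0 ^ 2 : MvPolynomial (Fin 9) K)
    - X 1 * X 2 * X 3 * X 6 * X 7 * X 8 = monomial α₂ 1 - monomial β₂ 1 := by
  simp [α₂, β₂, sgl, X, monomial_mul, monomial_pow]
lemma hG₃ : (X 0 * X 4 : MvPolynomial (Fin 9) K)
    - X 1 * X 3 * X 5 * X 7 = monomial α₃ 1 - monomial β₃ 1 := by
  simp [α₃, β₃, sgl, X, monomial_mul, monomial_pow]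
lemma hG₄ : (X 0 * X 5 : MvPolynomial (Fin 9) K)
    - X 2 * X 4 * X 6 * X 8 = monomial α₄ 1 - monomial β₄ 1 := by
  simp [α₄, β₄, sgl, X, monomial_mul, monomial_pow]

lemma phi_binom_zero {a b : Fin 9 →₀ ℕ} (h : degA a = degA b) :
    φ (monomial a (1:K) - monomial b 1) = 0 := by
  rw [map_sub, phi_monomial, phi_monomial, h, sub_self]

end Field2

end Bowtie

namespace Bowtie

lemma key_arith (s m : Fin 9 → ℕ)
    (h0 : s 0 + s 1 + s 2 = m 0 + m 1 + m 2)
    (h1 : s 0 + s 2 + s 3 = m 0 + m 2 + m 3)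
    (h2 : s 0 + s 1 + s 3 + s 4 = m 0 + m 1 + m 3 + m 4)
    (h3 : s 4 + s 5 = m 4 + m 5)
    (h4 : s 0 + s 5 + s 6 + s 8 = m 0 + m 5 + m 6 + m 8)
    (h5 : s 0 + s 6 + s 7 = m 0 + m 6 + m 7)
    (h6 : s 0 + s 7 + s 8 = m 0 + m 7 + m 8)
    (i : Fin 9) (hj : ∀ j, j < i → s j = m j) (hi : s i < m i) :
    (2 ≤ m 0) ∨ (1 ≤ m 0 ∧ 1 ≤ m 4) ∨ (1 ≤ m 0 ∧ 1 ≤ m 5) ∨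
      (1 ≤ m 1 ∧ 1 ≤ m 3 ∧ 2 ≤ m 5 ∧ 1 ≤ m 7) := by
  have hcase : ∀ k : Fin 9,
      k = 0 ∨ k = 1 ∨ k = 2 ∨ k = 3 ∨ k = 4 ∨ k = 5 ∨ k = 6 ∨ k = 7 ∨ k = 8 := by decide
  rcases hcase i with rfl | rfl | rfl | rfl | rfl | rfl | rfl | rfl | rfl
  · omega
  · have e0 := hj 0 (by decide); omega
  · have e0 := hj 0 (by decide); have e1 := hj 1 (by decide); omega
  · have e0 := hj 0 (by decide); have e1 := hj 1 (by decide); have e2 := hj 2 (by decide)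
    omega
  · have e0 := hj 0 (by decide); have e1 := hj 1 (by decide); have e2 := hj 2 (by decide)
    have e3 := hj 3 (by decide); omega
  · have e0 := hj 0 (by decide); have e1 := hj 1 (by decide); have e2 := hj 2 (by decide)
    have e3 := hj 3 (by decide); have e4 := hj 4 (by decide); omega
  · have e0 := hj 0 (by decide); have e1 := hj 1 (by decide); have e2 := hj 2 (by decide)
    have e3 := hj 3 (by decide); have e4 := hj 4 (by decide); have e5 := hj 5 (by decide)
    omega
  · have e0 := hj 0 (by decide); have e1 := hj 1 (by decide); have e2 := hj 2 (by decide)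
    have e3 := hj 3 (by decide); have e4 := hj 4 (by decide); have e5 := hj 5 (by decide)
    have e6 := hj 6 (by decide); omega
  · have e0 := hj 0 (by decide); have e1 := hj 1 (by decide); have e2 := hj 2 (by decide)
    have e3 := hj 3 (by decide); have e4 := hj 4 (by decide); have e5 := hj 5 (by decide)
    have e6 := hj 6 (by decide); have e7 := hj 7 (by decide); omega

end Bowtie

/-- In `K[e₀,…,e₇,θ]` (K a field of characteristic zero) with the lexicographic order
`θ > e₀ > ⋯ > e₇` (here `θ` is variable `0` and `eᵢ` is variable `i+1`), the four
binomials `g₁ = e₀e₂e₄²e₆ − e₁e₃²e₅e₇`, `g₂ = θ² − e₀e₁e₂e₅e₆e₇`,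
`g₃ = θe₃ − e₀e₂e₄e₆`, `g₄ = θe₄ − e₁e₃e₅e₇` form a Gröbner basis of the ideal they
generate. -/
theorem bowtie_groebner_basis {K : Type*} [Field K] [CharZero K] :
    let θ : MvPolynomial (Fin 9) K := X 0
    let e : Fin 8 → MvPolynomial (Fin 9) K := fun i => X i.succ
    let g₁ := e 0 * e 2 * e 4 ^ 2 * e 6 - e 1 * e 3 ^ 2 * e 5 * e 7
    let g₂ := θ ^ 2 - e 0 * e 1 * e 2 * e 5 * e 6 * e 7
    let g₃ := θ * e 3 - e 0 * e 2 * e 4 * e 6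
    let g₄ := θ * e 4 - e 1 * e 3 * e 5 * e 7
    IsLexGroebnerBasis {g₁, g₂, g₃, g₄} (Ideal.span {g₁, g₂, g₃, g₄}) := by
  open Bowtie in
  show IsLexGroebnerBasis
    { (X 1 * X 3 * X 5 ^ 2 * X 7 : MvPolynomial (Fin 9) K) - X 2 * X 4 ^ 2 * X 6 * X 8,
      X 0 ^ 2 - X 1 * X 2 * X 3 * X 6 * X 7 * X 8,
      X 0 * X 4 - X 1 * X 3 * X 5 * X 7,
      X 0 * X 5 - X 2 * X 4 * X 6 * X 8 }
    (Ideal.span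
    { (X 1 * X 3 * X 5 ^ 2 * X 7 : MvPolynomial (Fin 9) K) - X 2 * X 4 ^ 2 * X 6 * X 8,
      X 0 ^ 2 - X 1 * X 2 * X 3 * X 6 * X 7 * X 8,
      X 0 * X 4 - X 1 * X 3 * X 5 * X 7,
      X 0 * X 5 - X 2 * X 4 * X 6 * X 8 })
  rw [Bowtie.hG₁, Bowtie.hG₂, Bowtie.hG₃, Bowtie.hG₄]
  set G₁ : MvPolynomial (Fin 9) K := monomial Bowtie.α₁ 1 - monomial Bowtie.β₁ 1 with hG1
  set G₂ : MvPolynomial (Fin 9) K := monomial Bowtie.α₂ 1 - monomial Bowtie.β₂ 1 with hG2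
  set G₃ : MvPolynomial (Fin 9) K := monomial Bowtie.α₃ 1 - monomial Bowtie.β₃ 1 with hG3
  set G₄ : MvPolynomial (Fin 9) K := monomial Bowtie.α₄ 1 - monomial Bowtie.β₄ 1 with hG4
  constructor
  · intro x hx
    apply Ideal.subset_span
    simpa using hx
  · intro f hf hf0
    -- f is in the kernel of φ
    have hker : Bowtie.φ f = 0 := by
      have hsub : Ideal.span {G₁, G₂, G₃, G₄}
          ≤ RingHom.ker (Bowtie.φ (K := K)).toRingHom := by
        rw [Ideal.span_le]
        rintro x (rfl | rfl | rfl | rfl)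
        · exact Bowtie.phi_binom_zero Bowtie.degA_eq₁
        · exact Bowtie.phi_binom_zero Bowtie.degA_eq₂
        · exact Bowtie.phi_binom_zero Bowtie.degA_eq₃
        · exact Bowtie.phi_binom_zero Bowtie.degA_eq₄
      exact hsub hf
    -- the lex-largest monomial of f
    have hne : f.support.Nonempty := MvPolynomial.support_nonempty.mpr hf0
    obtain ⟨M, hM⟩ := Finset.max_of_nonempty (hne.image toLex)
    obtain ⟨m, hmsupp, hmeq⟩ := Finset.mem_image.mp (Finset.mem_of_max hM)
    have hLM : (↑(toLex m) : WithBot (Lex (Fin 9 →₀ ℕ))) = lexLeadMon f := by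
      rw [lexLeadMon, hM, hmeq]
    -- a partner monomial with the same degree
    obtain ⟨s, hssupp, hsne, hsdeg⟩ := Bowtie.exists_partner f hker m hmsupp
    have hslt : toLex s < toLex m := by
      have hle : (↑(toLex s) : WithBot (Lex (Fin 9 →₀ ℕ))) ≤ M :=
        hM ▸ Finset.le_max (Finset.mem_image.mpr ⟨s, hssupp, rfl⟩)
      rw [← hmeq] at hle
      have hle' : toLex s ≤ toLex m := by exact_mod_cast hle
      exact lt_of_le_of_ne hle' (fun h => hsne (toLex.injective h))
    obtain ⟨i, hj, hi⟩ := Finsupp.Lex.lt_iff.mp hslt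
    simp only [ofLex_toLex] at hj hi
    -- the seven toric equations
    have hA : ∀ v, Bowtie.degA s v = Bowtie.degA m v := fun v => by rw [hsdeg]
    have h0 := hA 0; rw [Bowtie.degA_val0, Bowtie.degA_val0] at h0
    have h1 := hA 1; rw [Bowtie.degA_val1, Bowtie.degA_val1] at h1
    have h2 := hA 2; rw [Bowtie.degA_val2, Bowtie.degA_val2] at h2
    have h3 := hA 3; rw [Bowtie.degA_val3, Bowtie.degA_val3] at h3
    have h4 := hA 4; rw [Bowtie.degA_val4, Bowtie.degA_val4] at h4
    have h5 := hA 5; rw [Bowtie.degA_val5, Bowtie.degA_val5] at h5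
    have h6 := hA 6; rw [Bowtie.degA_val6, Bowtie.degA_val6] at h6
    rcases Bowtie.key_arith (⇑s) (⇑m) h0 h1 h2 h3 h4 h5 h6 i hj hi with h | h | h | h
    · refine ⟨G₂, by simp, Bowtie.α₂, m, ?_, hLM, ?_⟩
      · rw [hG2, Bowtie.leadMon_binom Bowtie.lt₂]
      · intro v; fin_cases v <;>
          simp [Bowtie.α₂, Bowtie.sgl, Finsupp.single_apply] <;> omega
    · refine ⟨G₃, by simp, Bowtie.α₃, m, ?_, hLM, ?_⟩
      · rw [hG3, Bowtie.leadMon_binom Bowtie.lt₃]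
      · intro v; fin_cases v <;>
          simp [Bowtie.α₃, Bowtie.sgl, Finsupp.single_apply] <;> omega
    · refine ⟨G₄, by simp, Bowtie.α₄, m, ?_, hLM, ?_⟩
      · rw [hG4, Bowtie.leadMon_binom Bowtie.lt₄]
      · intro v; fin_cases v <;>
          simp [Bowtie.α₄, Bowtie.sgl, Finsupp.single_apply] <;> omega
    · refine ⟨G₁, by simp, Bowtie.α₁, m, ?_, hLM, ?_⟩
      · rw [hG1, Bowtie.leadMon_binom Bowtie.lt₁]
      · intro v; fin_cases v <;>
          simp [Bowtie.α₁, Bowtie.sgl, Finsupp.single_apply] <;> omega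
end
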